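/- arXiv:1710.05123 — 4 statements merged into one kernel-verified Lean document; each statement's English description precedes it below -/
import Mathlib

section
/- Suppose depth R = 0 and M is a nonzero finitely generated R-module lying in ΩDeep(R) (when depth R = 0, Deep(R) consists of all finitely generated R-modules, so M ∈ ΩDeep(R) means there is a short exact sequence 0 → M → R^n → X → 0 with X finitely generated). Then the following are equivalent: (1) M has a free direct summand; (2) M is faithful, i.e. Ann_R(M) = 0; (3) Soc(R) is not contained in Ann_R(M), i.e. Soc(R)·M ≠ 0; (4) M is not a minimal syzygy, i.e. there is no short exact sequence 0 → M → R^{μ(X)} → X → 0 with X a finitely generated R-module. -/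
universe u

open IsLocalRing

noncomputable def rdepth (R : Type u) [CommRing R] [IsLocalRing R]
    (M : Type u) [AddCommGroup M] [Module R M] : ℕ :=
  sSup {n : ℕ | ∃ rs : List R, rs.length = n ∧ (∀ r ∈ rs, r ∈ maximalIdeal R) ∧
    RingTheory.Sequence.IsRegular M rs}

def Deep (R : Type u) [CommRing R] [IsLocalRing R]
    (M : Type u) [AddCommGroup M] [Module R M] : Prop :=
  Module.Finite R M ∧ rdepth R R ≤ rdepth R M

def OmegaDeep (R : Type u) [CommRing R] [IsLocalRing R]
    (M : Type u) [AddCommGroup M] [Module R M] : Prop :=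
  ∃ (n : ℕ) (f : M →ₗ[R] (Fin n → R)), Function.Injective f ∧
    Deep R ((Fin n → R) ⧸ LinearMap.range f)

def DF (R : Type u) [CommRing R] [IsLocalRing R]
    (M : Type u) [AddCommGroup M] [Module R M] : Prop :=
  ∃ (n : ℕ) (f : R →ₗ[R] (Fin n → M)), Function.Injective f ∧
    Deep R ((Fin n → M) ⧸ LinearMap.range f)

def HasFreeSummand (R : Type u) [CommRing R] (M : Type u) [AddCommGroup M] [Module R M] : Prop :=
  ∃ (p : M →ₗ[R] R) (s : R →ₗ[R] M), p.comp s = LinearMap.id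

noncomputable def mu (R : Type u) [CommRing R] (M : Type u) [AddCommGroup M] [Module R M] : ℕ :=
  sInf {n : ℕ | ∃ s : Fin n → M, Submodule.span R (Set.range s) = ⊤}

abbrev ExtVanishes (R : Type u) [CommRing R] (M N : Type u) [AddCommGroup M] [Module R M]
    [AddCommGroup N] [Module R N] (i : ℕ) : Prop :=
  Subsingleton (((Ext R (ModuleCat.{u} R) i).obj
    (Opposite.op (ModuleCat.of R M))).obj (ModuleCat.of R N))

set_option linter.unusedSectionVars false

theorem _root_.Ideal.mem_colon_singleton {R : Type u} [CommRing R] {I : Ideal R} {x r : R} :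
    r ∈ I.colon (Ideal.span {x}) ↔ r * x ∈ I := by
  rw [Submodule.mem_colon_span_singleton, smul_eq_mul]

namespace StmtAux

variable {R : Type u} [CommRing R]

/-- `x` is a regular element on `R ⧸ I`. -/
def Reg (I : Ideal R) (x : R) : Prop := ∀ r : R, x * r ∈ I → r ∈ I

/-- regular sequence on `R ⧸ I` (no nontriviality condition). -/
def RegSeq : Ideal R → List R → Prop
  | _, [] => True
  | I, (x :: xs) => Reg I x ∧ RegSeq (I ⊔ Ideal.span {x}) xs

/-- `𝔪 ⊆ ZD(R⧸J)` in solved form. -/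
def Full [IsLocalRing R] (J : Ideal R) : Prop :=
  ∃ u, u ∉ J ∧ ∀ x ∈ maximalIdeal R, x * u ∈ J

/-- associated primes of `R ⧸ I`, colon form. -/
def AssI (I : Ideal R) : Set (Ideal R) :=
  {p | p.IsPrime ∧ ∃ u, u ∉ I ∧ p = I.colon (Ideal.span {u})}

theorem regseq_congr {I J : Ideal R} {xs : List R} (h : RegSeq I xs) (hIJ : I = J) :
    RegSeq J xs := hIJ ▸ h

theorem regseq_append {I : Ideal R} {s t : List R} :
    RegSeq I (s ++ t) ↔ RegSeq I s ∧ RegSeq (I ⊔ Ideal.ofList s) t := by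
  induction s generalizing I with
  | nil => simp [RegSeq, Ideal.ofList_nil]
  | cons x s ih =>
      show Reg I x ∧ RegSeq (I ⊔ Ideal.span {x}) (s ++ t) ↔ _
      rw [ih, Ideal.ofList_cons, ← sup_assoc, ← and_assoc]
      rfl

variable [IsNoetherianRing R] [IsLocalRing R]

theorem reg_swap {I : Ideal R} {a b : R} (ha𝔪 : a ∈ maximalIdeal R)
    (ha : Reg I a) (hb : Reg (I ⊔ Ideal.span {a}) b) :
    Reg I b ∧ Reg (I ⊔ Ideal.span {b}) a := by
  have regIb : Reg I b := by
    set K : Ideal R := I.colon (Ideal.span {b}) with hK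
    have hmem : ∀ r, r ∈ K ↔ b * r ∈ I := by
      intro r; rw [hK, Ideal.mem_colon_singleton, mul_comm]
    have hle : K ≤ I ⊔ Ideal.span {a} • K := by
      intro r hr
      rw [hmem] at hr
      obtain ⟨i, hi, y, hy, rfl⟩ := Submodule.mem_sup.mp
        (hb r (Submodule.mem_sup_left hr))
      obtain ⟨s, rfl⟩ := Ideal.mem_span_singleton'.mp hy
      have hbs : s ∈ K := by
        rw [hmem]
        have h1 : a * (b * s) ∈ I := by
          have : a * (b * s) = b * (i + s * a) - b * i := by ring
          rw [this]
          exact Ideal.sub_mem _ hr (Ideal.mul_mem_left _ _ hi)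
        exact ha _ h1
      refine Submodule.add_mem _ (Submodule.mem_sup_left hi) (Submodule.mem_sup_right ?_)
      have := Submodule.smul_mem_smul (Ideal.mem_span_singleton_self a) hbs
      simpa [smul_eq_mul, mul_comm] using this
    have hKI : K ≤ I := by
      refine Submodule.le_of_le_smul_of_le_jacobson_bot (IsNoetherian.noetherian K) ?_ hle
      refine le_trans ?_ (IsLocalRing.maximalIdeal_le_jacobson ⊥)
      rw [Ideal.span_le, Set.singleton_subset_iff]; exact ha𝔪
    intro r hr
    exact hKI ((hmem r).mpr hr)
  refine ⟨regIb, ?_⟩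
  intro r hr
  obtain ⟨i, hi, y, hy, heq⟩ := Submodule.mem_sup.mp hr
  obtain ⟨s, hs⟩ := Ideal.mem_span_singleton'.mp hy
  have h1 : b * s ∈ I ⊔ Ideal.span {a} := by
    have : b * s = a * r - i := by rw [← heq, ← hs]; ring
    rw [this]
    exact Submodule.sub_mem _
      (Submodule.mem_sup_right (Ideal.mem_span_singleton'.mpr ⟨r, by ring⟩))
      (Submodule.mem_sup_left hi)
  obtain ⟨i', hi', z, hz, hs2⟩ := Submodule.mem_sup.mp (hb s h1)
  obtain ⟨t, ht⟩ := Ideal.mem_span_singleton'.mp hz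
  have h2 : a * (r - t * b) ∈ I := by
    have heq2 : a * (r - t * b) = i + i' * b := by
      linear_combination -heq - hs - b * hs2 - b * ht
    rw [heq2]
    exact Submodule.add_mem _ hi (Ideal.mul_mem_right b _ hi')
  have h3 : r - t * b ∈ I := ha _ h2
  have : r = (r - t * b) + t * b := by ring
  rw [this]
  exact Submodule.add_mem _ (Submodule.mem_sup_left h3)
    (Submodule.mem_sup_right (Ideal.mem_span_singleton'.mpr ⟨t, rfl⟩))

theorem regseq_snoc_front {I : Ideal R} {xs : List R} {z : R}
    (hxs : ∀ x ∈ xs, x ∈ maximalIdeal R)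
    (h : RegSeq I (xs ++ [z])) : Reg I z ∧ RegSeq (I ⊔ Ideal.span {z}) xs := by
  induction xs generalizing I with
  | nil => exact ⟨h.1, trivial⟩
  | cons x xs ih =>
      obtain ⟨h1, h2⟩ := h
      obtain ⟨h3, h4⟩ := ih (fun y hy => hxs y (List.mem_cons_of_mem _ hy)) h2
      obtain ⟨h5, h6⟩ := reg_swap (hxs x List.mem_cons_self) h1 h3
      exact ⟨h5, h6, regseq_congr h4 (by rw [sup_right_comm])⟩

theorem exists_assI_ge {I : Ideal R} {r : R} (hr : r ∉ I) :
    ∃ p ∈ AssI I, I.colon (Ideal.span {r}) ≤ p := by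
  obtain ⟨p, hpC, hmax⟩ := (set_has_maximal_iff_noetherian.mpr inferInstance)
    {J : Ideal R | ∃ u, u ∉ I ∧ J = I.colon (Ideal.span {u}) ∧ I.colon (Ideal.span {r}) ≤ J}
    ⟨_, r, hr, rfl, le_rfl⟩
  obtain ⟨u, hu, rfl, hle⟩ := hpC
  refine ⟨_, ⟨Ideal.isPrime_iff.mpr ⟨?_, ?_⟩, u, hu, rfl⟩, hle⟩
  · intro htop
    exact hu (by simpa using Ideal.mem_colon_singleton.mp (htop ▸ Submodule.mem_top : (1:R) ∈ I.colon (Ideal.span {u})))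
  · intro x y hxy
    by_cases hyu : y * u ∈ I
    · exact Or.inr (Ideal.mem_colon_singleton.mpr hyu)
    · left
      have hJC : I.colon (Ideal.span {y * u}) ∈
          {J : Ideal R | ∃ u, u ∉ I ∧ J = I.colon (Ideal.span {u}) ∧ I.colon (Ideal.span {r}) ≤ J} := by
        refine ⟨y * u, hyu, rfl, le_trans hle ?_⟩
        intro c hc
        rw [Ideal.mem_colon_singleton] at hc ⊢
        have : c * (y * u) = y * (c * u) := by ring
        rw [this]; exact Ideal.mul_mem_left _ _ hc
      have hple : I.colon (Ideal.span {u}) ≤ I.colon (Ideal.span {y * u}) := by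
        intro c hc
        rw [Ideal.mem_colon_singleton] at hc ⊢
        have : c * (y * u) = y * (c * u) := by ring
        rw [this]; exact Ideal.mul_mem_left _ _ hc
      have heq := (eq_of_le_of_not_lt hple (hmax _ hJC)).symm
      rw [← heq]
      rw [Ideal.mem_colon_singleton] at hxy ⊢
      have : x * (y * u) = x * y * u := by ring
      rw [this]; exact hxy

theorem assI_finite (I : Ideal R) : (AssI I).Finite := by
  induction I using IsNoetherian.induction with
  | _ I ih =>
  by_cases hAss : AssI I = ∅
  · simp [hAss]
  obtain ⟨p, hp⟩ := Set.nonempty_iff_ne_empty.mpr hAss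
  obtain ⟨hpp, u, hu, rfl⟩ := hp
  have hlt : I < I ⊔ Ideal.span {u} := by
    refine lt_of_le_of_ne le_sup_left (fun heq => hu ?_)
    rw [heq]
    exact Submodule.mem_sup_right (Ideal.mem_span_singleton_self u)
  refine Set.Finite.subset ((ih _ hlt).insert (I.colon (Ideal.span {u}))) ?_
  rintro q ⟨hq, v, hv, rfl⟩
  by_cases hcase : ∀ c : R, c * v ∈ I ⊔ Ideal.span {u} → c * v ∈ I
  · right
    have hvJ : v ∉ I ⊔ Ideal.span {u} := fun hvJ => hv (by simpa using hcase 1 (by simpa using hvJ))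
    have heq : I.colon (Ideal.span {v}) = (I ⊔ Ideal.span {u}).colon (Ideal.span {v}) := by
      apply le_antisymm
      · intro c hc
        rw [Ideal.mem_colon_singleton] at hc ⊢
        exact Submodule.mem_sup_left hc
      · intro c hc
        rw [Ideal.mem_colon_singleton] at hc ⊢
        exact hcase c hc
    exact ⟨heq ▸ hq, v, hvJ, heq⟩
  · left
    push_neg at hcase
    obtain ⟨c, hcJ, hcI⟩ := hcase
    obtain ⟨i, hi, y, hy, hdec⟩ := Submodule.mem_sup.mp hcJ
    obtain ⟨d, hd⟩ := Ideal.mem_span_singleton'.mp hy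
    have hdnp : d * u ∉ I := fun hdu => hcI (by rw [← hdec, ← hd]; exact Submodule.add_mem _ hi hdu)
    apply le_antisymm
    · intro w hw
      rw [Ideal.mem_colon_singleton] at hw
      have h1 : u * (w * d) ∈ I := by
        have heq2 : u * (w * d) = w * (c * v) - w * i := by
          linear_combination w * hdec + w * hd
        rw [heq2]
        refine Submodule.sub_mem _ ?_ (Ideal.mul_mem_left _ _ hi)
        have hwc : w * (c * v) = c * (w * v) := by ring
        rw [hwc]; exact Ideal.mul_mem_left _ _ hw
      have h2 : w * d ∈ I.colon (Ideal.span {u}) := by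
        rw [Ideal.mem_colon_singleton]
        have : w * d * u = u * (w * d) := by ring
        rw [this]; exact h1
      rcases hpp.mem_or_mem h2 with h | h
      · exact h
      · exact absurd (Ideal.mem_colon_singleton.mp h) hdnp
    · intro w hw
      rw [Ideal.mem_colon_singleton] at hw
      have h1 : (w * c) * v ∈ I := by
        have heq2 : (w * c) * v = w * i + d * (w * u) := by
          linear_combination (-w) * hdec - w * hd
        rw [heq2]
        exact Submodule.add_mem _ (Ideal.mul_mem_left _ _ hi) (Ideal.mul_mem_left _ _ hw)
      have h2 : w * c ∈ I.colon (Ideal.span {v}) := Ideal.mem_colon_singleton.mpr h1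
      rcases hq.mem_or_mem h2 with h | h
      · exact h
      · exact absurd (Ideal.mem_colon_singleton.mp h) hcI

theorem exists_avoid {T : Set (Ideal R)} (hT : T.Finite) (hprime : ∀ p ∈ T, p.IsPrime)
    (h : ∀ p ∈ T, ¬ maximalIdeal R ≤ p) : ∃ z ∈ maximalIdeal R, ∀ p ∈ T, z ∉ p := by
  classical
  by_contra hcon
  push_neg at hcon
  have hsub : ((maximalIdeal R : Ideal R) : Set R) ⊆
      ⋃ p ∈ ((hT.toFinset : Finset (Ideal R)) : Set (Ideal R)), ((id p : Ideal R) : Set R) := by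
    intro z hz
    obtain ⟨p, hpT, hzp⟩ := hcon z hz
    exact Set.mem_biUnion (by simpa using (hT.mem_toFinset.mpr hpT)) hzp
  obtain ⟨p, hpT, hle⟩ := (Ideal.subset_union_prime (⊤ : Ideal R) ⊤
    (fun i hi _ _ => hprime i (hT.mem_toFinset.mp hi))).mp hsub
  exact h p (hT.mem_toFinset.mp hpT) hle

theorem reg_of_avoid {J : Ideal R} {z : R} (h : ∀ p ∈ AssI J, z ∉ p) : Reg J z := by
  intro r hr
  by_contra hrJ
  obtain ⟨p, hp, hle⟩ := exists_assI_ge hrJ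
  exact h p hp (hle (Ideal.mem_colon_singleton.mpr (by rwa [mul_comm] at hr ⊢)))

theorem not_le_of_reg {J : Ideal R} {x : R} (hx : x ∈ maximalIdeal R) (hreg : Reg J x)
    {p : Ideal R} (hp : p ∈ AssI J) : ¬ maximalIdeal R ≤ p := by
  obtain ⟨hpp, u, hu, rfl⟩ := hp
  intro hle
  exact hu (hreg u (Ideal.mem_colon_singleton.mp (hle hx)))

theorem full_or_reg (J : Ideal R) : Full J ∨ ∃ z ∈ maximalIdeal R, Reg J z := by
  by_cases h : ∃ p ∈ AssI J, maximalIdeal R ≤ p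
  · obtain ⟨p, ⟨hpp, u, hu, rfl⟩, hle⟩ := h
    exact Or.inl ⟨u, hu, fun x hx => Ideal.mem_colon_singleton.mp (hle hx)⟩
  · push_neg at h
    obtain ⟨z, hz, hzp⟩ := exists_avoid (assI_finite J) (fun p hp => hp.1) h
    exact Or.inr ⟨z, hz, reg_of_avoid hzp⟩

theorem common_reg {J₁ J₂ : Ideal R} (h₁ : ∃ x ∈ maximalIdeal R, Reg J₁ x)
    (h₂ : ∃ x ∈ maximalIdeal R, Reg J₂ x) :
    ∃ z ∈ maximalIdeal R, Reg J₁ z ∧ Reg J₂ z := by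
  obtain ⟨x₁, hx₁, hr₁⟩ := h₁
  obtain ⟨x₂, hx₂, hr₂⟩ := h₂
  obtain ⟨z, hz, hzp⟩ := exists_avoid ((assI_finite J₁).union (assI_finite J₂))
    (fun p hp => hp.elim (fun h => h.1) (fun h => h.1))
    (fun p hp => hp.elim (not_le_of_reg hx₁ hr₁) (not_le_of_reg hx₂ hr₂))
  exact ⟨z, hz, reg_of_avoid (fun p hp => hzp p (Or.inl hp)),
    reg_of_avoid (fun p hp => hzp p (Or.inr hp))⟩

theorem full_congr {J J' : Ideal R} (h : Full J) (e : J = J') : Full J' := e ▸ h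

theorem k1 {I : Ideal R} {a b : R} (hb𝔪 : b ∈ maximalIdeal R)
    (ha : Reg I a) (hb : Reg I b) (h : Full (I ⊔ Ideal.span {a})) :
    Full (I ⊔ Ideal.span {b}) := by
  obtain ⟨u, hu, hfull⟩ := h
  obtain ⟨i, hi, y, hy, hdec⟩ := Submodule.mem_sup.mp (hfull b hb𝔪)
  obtain ⟨v, hv⟩ := Ideal.mem_span_singleton'.mp hy
  refine ⟨v, ?_, ?_⟩
  · intro hvmem
    obtain ⟨i', hi', z, hz, hdec'⟩ := Submodule.mem_sup.mp hvmem
    obtain ⟨w, hw⟩ := Ideal.mem_span_singleton'.mp hz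
    have hbu : b * (u - a * w) ∈ I := by
      have heq : b * (u - a * w) = i + a * i' := by
        linear_combination -hdec - hv - a * hdec' - a * hw
      rw [heq]; exact Submodule.add_mem _ hi (Ideal.mul_mem_left _ _ hi')
    have huI := hb _ hbu
    apply hu
    have heq : u = (u - a * w) + w * a := by ring
    rw [heq]
    exact Submodule.add_mem _ (Submodule.mem_sup_left huI)
      (Submodule.mem_sup_right (Ideal.mem_span_singleton'.mpr ⟨w, rfl⟩))
  · intro c hc
    obtain ⟨i₂, hi₂, y₂, hy₂, hdec₂⟩ := Submodule.mem_sup.mp (hfull c hc)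
    obtain ⟨w₂, hw₂⟩ := Ideal.mem_span_singleton'.mp hy₂
    have hkey : a * (c * v - b * w₂) ∈ I := by
      have heq : a * (c * v - b * w₂) = b * i₂ - c * i := by
        linear_combination c * hdec + c * hv - b * hdec₂ - b * hw₂
      rw [heq]
      exact Submodule.sub_mem _ (Ideal.mul_mem_left _ _ hi₂) (Ideal.mul_mem_left _ _ hi)
    have h2 := ha _ hkey
    have heq : c * v = (c * v - b * w₂) + w₂ * b := by ring
    rw [heq]
    exact Submodule.add_mem _ (Submodule.mem_sup_left h2)
      (Submodule.mem_sup_right (Ideal.mem_span_singleton'.mpr ⟨w₂, rfl⟩))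

theorem k120 : ∀ (n : ℕ) (I : Ideal R) (xs ys : List R), xs.length = n → ys.length = n →
    (∀ x ∈ xs, x ∈ maximalIdeal R) → (∀ y ∈ ys, y ∈ maximalIdeal R) →
    RegSeq I xs → RegSeq I ys → Full (I ⊔ Ideal.ofList xs) → Full (I ⊔ Ideal.ofList ys) := by
  intro n
  induction n with
  | zero =>
      intro I xs ys hlx hly _ _ _ _ h
      rw [List.length_eq_zero_iff] at hlx hly
      subst hlx; subst hly
      exact h
  | succ n ih =>
      intro I xs ys hlx hly hxm hym hrx hry hfull
      have hxne : xs ≠ [] := by intro h; rw [h] at hlx; simp at hlx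
      have hyne : ys ≠ [] := by intro h; rw [h] at hly; simp at hly
      obtain ⟨q, x, rfl⟩ : ∃ q x, xs = q ++ [x] :=
        ⟨xs.dropLast, xs.getLast hxne, (List.dropLast_append_getLast hxne).symm⟩
      obtain ⟨r, y, rfl⟩ : ∃ r y, ys = r ++ [y] :=
        ⟨ys.dropLast, ys.getLast hyne, (List.dropLast_append_getLast hyne).symm⟩
      have hlq : q.length = n := by simpa using hlx
      have hlr : r.length = n := by simpa using hly
      have hq𝔪 : ∀ w ∈ q, w ∈ maximalIdeal R := fun w hw => hxm w (List.mem_append_left _ hw)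
      have hr𝔪 : ∀ w ∈ r, w ∈ maximalIdeal R := fun w hw => hym w (List.mem_append_left _ hw)
      have hx𝔪 : x ∈ maximalIdeal R := hxm x (List.mem_append_right _ (List.mem_singleton_self x))
      have hy𝔪 : y ∈ maximalIdeal R := hym y (List.mem_append_right _ (List.mem_singleton_self y))
      rw [regseq_append] at hrx hry
      have hregx : Reg (I ⊔ Ideal.ofList q) x := hrx.2.1
      have hregy : Reg (I ⊔ Ideal.ofList r) y := hry.2.1
      obtain ⟨z, hz𝔪, hz1, hz2⟩ := common_reg ⟨x, hx𝔪, hregx⟩ ⟨y, hy𝔪, hregy⟩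
      have step1 : Full (I ⊔ Ideal.ofList q ⊔ Ideal.span {z}) :=
        k1 hz𝔪 hregx hz1 (full_congr hfull (by
          rw [Ideal.ofList_append, Ideal.ofList_singleton, sup_assoc]))
      have hzq := regseq_snoc_front hq𝔪 (regseq_append.mpr ⟨hrx.1, hz1, trivial⟩)
      have hzr := regseq_snoc_front hr𝔪 (regseq_append.mpr ⟨hry.1, hz2, trivial⟩)
      have step2 : Full (I ⊔ Ideal.span {z} ⊔ Ideal.ofList r) :=
        ih (I ⊔ Ideal.span {z}) q r hlq hlr hq𝔪 hr𝔪 hzq.2 hzr.2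
          (full_congr step1 (by rw [sup_right_comm]))
      have step3 : Full (I ⊔ Ideal.ofList r ⊔ Ideal.span {y}) :=
        k1 hy𝔪 hz2 hregy (full_congr step2 (by rw [sup_right_comm]))
      exact full_congr step3 (by rw [Ideal.ofList_append, Ideal.ofList_singleton, sup_assoc])

theorem ofList_le_maximalIdeal {xs : List R} (h : ∀ x ∈ xs, x ∈ maximalIdeal R) :
    Ideal.ofList xs ≤ maximalIdeal R := by
  rw [Ideal.span_le]
  intro x hx
  exact h x hx

theorem exists_bound :
    ∃ d : ℕ, ∀ xs : List R, (∀ x ∈ xs, x ∈ maximalIdeal R) → RegSeq ⊥ xs → xs.length ≤ d := by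
  obtain ⟨J₀, hJ₀, hmax⟩ := (set_has_maximal_iff_noetherian.mpr inferInstance)
    {J : Ideal R | ∃ xs : List R, (∀ x ∈ xs, x ∈ maximalIdeal R) ∧ RegSeq ⊥ xs ∧ J = Ideal.ofList xs}
    ⟨⊥, [], by simp, trivial, by simp [Ideal.ofList_nil]⟩
  obtain ⟨xs₀, hxs₀𝔪, hxs₀reg, rfl⟩ := hJ₀
  have hfull : Full (Ideal.ofList xs₀) := by
    rcases full_or_reg (Ideal.ofList xs₀) with h | ⟨z, hz𝔪, hzreg⟩
    · exact h
    · exfalso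
      have hzne : z ∉ Ideal.ofList xs₀ := by
        intro hz
        have h1 : (1 : R) ∈ Ideal.ofList xs₀ := hzreg 1 (by simpa using hz)
        exact (IsLocalRing.maximalIdeal.isMaximal R).ne_top
          (top_le_iff.mp (fun w _ => ofList_le_maximalIdeal hxs₀𝔪
            (by simpa using Ideal.mul_mem_right w _ h1)))
      refine hmax (Ideal.ofList (xs₀ ++ [z])) ⟨xs₀ ++ [z], ?_, ?_, rfl⟩ ?_
      · intro w hw
        rcases List.mem_append.mp hw with h | h
        · exact hxs₀𝔪 w h
        · rw [List.mem_singleton.mp h]; exact hz𝔪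
      · refine regseq_append.mpr ⟨hxs₀reg, ?_, trivial⟩
        intro r hr
        rw [bot_sup_eq] at hr ⊢
        exact hzreg r hr
      · rw [Ideal.ofList_append, Ideal.ofList_singleton]
        refine lt_of_le_of_ne le_sup_left (fun heq => hzne ?_)
        rw [heq]
        exact Submodule.mem_sup_right (Ideal.mem_span_singleton_self z)
  refine ⟨xs₀.length, fun ys hys𝔪 hysreg => ?_⟩
  by_contra hlen
  push_neg at hlen
  set d := xs₀.length with hd
  obtain ⟨w, rest, hdrop⟩ : ∃ w rest, ys.drop d = w :: rest := by
    cases h : ys.drop d with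
    | nil =>
        exfalso
        have hld : (ys.drop d).length = ys.length - d := List.length_drop
        rw [h] at hld
        simp at hld
        omega
    | cons w rest => exact ⟨w, rest, rfl⟩
  have htake : (ys.take d).length = d := by
    rw [List.length_take]; omega
  have h0 : RegSeq ⊥ (ys.take d ++ ys.drop d) := by
    rw [List.take_append_drop]; exact hysreg
  have h1 := regseq_append.mp h0
  have h2 := h1.2
  rw [hdrop] at h2
  have hw𝔪 : w ∈ maximalIdeal R :=
    hys𝔪 w (List.drop_subset d ys (hdrop ▸ (List.mem_cons_self : w ∈ w :: rest)))
  have hfull2 : Full (⊥ ⊔ Ideal.ofList (ys.take d)) :=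
    k120 d ⊥ xs₀ (ys.take d) rfl htake hxs₀𝔪
      (fun v hv => hys𝔪 v (List.take_subset d ys hv)) hxs₀reg h1.1
      (full_congr hfull (bot_sup_eq _).symm)
  obtain ⟨u, hu, hum⟩ := hfull2
  exact hu (h2.1 u (hum w hw𝔪))
open Pointwise in
theorem smul_top_eq_map (I : Ideal R) (r : R) :
    r • (⊤ : Submodule R (R ⧸ I)) = Submodule.map I.mkQ (I ⊔ Ideal.span {r}) := by
  apply le_antisymm
  · intro x hx
    obtain ⟨y, -, rfl⟩ := Set.mem_smul_set.mp hx
    obtain ⟨t, rfl⟩ := Submodule.Quotient.mk_surjective I y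
    refine Submodule.mem_map.mpr ⟨r * t,
      Submodule.mem_sup_right (Ideal.mem_span_singleton'.mpr ⟨t, mul_comm t r⟩), ?_⟩
    rw [Submodule.mkQ_apply, ← Submodule.Quotient.mk_smul, smul_eq_mul]
  · rintro x ⟨s, hs, rfl⟩
    obtain ⟨i, hi, y, hy, rfl⟩ := Submodule.mem_sup.mp hs
    obtain ⟨a, rfl⟩ := Ideal.mem_span_singleton'.mp hy
    have heq : I.mkQ (i + a * r) = r • (I.mkQ a) := by
      rw [map_add, Submodule.mkQ_apply, Submodule.mkQ_apply, Submodule.mkQ_apply,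
        (Submodule.Quotient.mk_eq_zero I).mpr hi, zero_add, ← Submodule.Quotient.mk_smul,
        smul_eq_mul, mul_comm]
    rw [heq]
    exact Submodule.smul_mem_pointwise_smul _ _ _ Submodule.mem_top

open Pointwise in
noncomputable def quotSMulTopEquiv (I : Ideal R) (r : R) :
    QuotSMulTop r (R ⧸ I) ≃ₗ[R] R ⧸ (I ⊔ Ideal.span {r}) :=
  (Submodule.quotEquivOfEq _ _ (smul_top_eq_map I r)).trans
    (Submodule.quotientQuotientEquivQuotient I (I ⊔ Ideal.span {r}) le_sup_left)

theorem reg_of_isSMulRegular {I : Ideal R} {x : R} (h : IsSMulRegular (R ⧸ I) x) : Reg I x := by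
  intro r hr
  have h0 : x • Submodule.Quotient.mk (p := (I : Submodule R R)) r = x • (0 : R ⧸ I) := by
    rw [smul_zero, ← Submodule.Quotient.mk_smul, smul_eq_mul]
    exact (Submodule.Quotient.mk_eq_zero _).mpr hr
  exact (Submodule.Quotient.mk_eq_zero _).mp (h h0)

open RingTheory.Sequence in
theorem regseq_of_isWeaklyRegular : ∀ (rs : List R) (I : Ideal R),
    IsWeaklyRegular (R ⧸ I) rs → RegSeq I rs := by
  intro rs
  induction rs with
  | nil => intro I _; trivial
  | cons r rs ih =>
      intro I h
      obtain ⟨h1, h2⟩ := (isWeaklyRegular_cons_iff _ r rs).mp h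
      refine ⟨reg_of_isSMulRegular h1, ih _ ?_⟩
      exact ((quotSMulTopEquiv I r).isWeaklyRegular_congr rs).mp h2

theorem regseq_of_isRegular {rs : List R} (h : RingTheory.Sequence.IsRegular R rs) :
    RegSeq ⊥ rs := by
  apply regseq_of_isWeaklyRegular
  exact (((Submodule.quotEquivOfEqBot (⊥ : Ideal R) rfl)).isWeaklyRegular_congr rs).mpr
    h.toIsWeaklyRegular

theorem isRegular_single {x : R} (hx : x ∈ maximalIdeal R) (hreg : Reg ⊥ x) :
    RingTheory.Sequence.IsRegular R [x] := by
  constructor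
  · refine (RingTheory.Sequence.isWeaklyRegular_cons_iff R x []).mpr
      ⟨?_, RingTheory.Sequence.IsWeaklyRegular.nil _ _⟩
    intro a b hab
    have h1 : x * (a - b) ∈ (⊥ : Ideal R) := by
      simp only [smul_eq_mul] at hab
      rw [mul_sub, hab]
      simp
    have := hreg _ h1
    rw [Submodule.mem_bot] at this
    exact sub_eq_zero.mp this
  · intro htop
    have h1 : (1 : R) ∈ Ideal.ofList [x] • (⊤ : Submodule R R) := by
      rw [← htop]; trivial
    have h2 : Ideal.ofList [x] • (⊤ : Submodule R R) ≤ (maximalIdeal R : Submodule R R) := by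
      refine Submodule.smul_le.mpr (fun r hr n _ => ?_)
      have hrm : r ∈ maximalIdeal R := by
        have : Ideal.ofList [x] ≤ maximalIdeal R := by
          rw [Ideal.ofList_singleton, Ideal.span_le, Set.singleton_subset_iff]
          exact hx
        exact this hr
      exact Ideal.mul_mem_right n _ hrm
    exact (IsLocalRing.maximalIdeal.isMaximal R).ne_top
      ((Ideal.eq_top_iff_one _).mpr (h2 h1))

theorem soc_ne_bot (hdepth : rdepth R R = 0) :
    Submodule.annihilator (maximalIdeal R) ≠ (⊥ : Ideal R) := by
  obtain ⟨d, hd⟩ := exists_bound (R := R)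
  set S : Set ℕ := {n : ℕ | ∃ rs : List R, rs.length = n ∧ (∀ r ∈ rs, r ∈ maximalIdeal R) ∧
    RingTheory.Sequence.IsRegular R rs} with hS
  have h0 : 0 ∈ S := ⟨[], rfl, by simp, RingTheory.Sequence.IsRegular.nil _ _⟩
  have hbdd : BddAbove S := by
    refine ⟨d, fun n hn => ?_⟩
    obtain ⟨rs, hlen, h𝔪, hreg⟩ := hn
    exact hlen ▸ hd rs h𝔪 (regseq_of_isRegular hreg)
  have hsup : sSup S = 0 := hdepth
  have hnoreg : ¬∃ z ∈ maximalIdeal R, Reg (⊥ : Ideal R) z := by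
    rintro ⟨z, hz, hzreg⟩
    have h1 : (1 : ℕ) ∈ S := ⟨[z], rfl, by simpa using hz, isRegular_single hz hzreg⟩
    have h2 := le_csSup hbdd h1
    omega
  rcases full_or_reg (⊥ : Ideal R) with hfull | hreg'
  · obtain ⟨u, hu, hum⟩ := hfull
    intro heq
    apply hu
    rw [← heq]
    refine Submodule.mem_annihilator.mpr (fun n hn => ?_)
    have := hum n hn
    rw [Submodule.mem_bot] at this
    rw [smul_eq_mul, mul_comm]
    exact this
  · exact absurd hreg' hnoreg

section PartC

theorem coord_mem_smul_top {n : ℕ} {v : Fin n → R} (h : ∀ i, v i ∈ maximalIdeal R) :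
    v ∈ (maximalIdeal R) • (⊤ : Submodule R (Fin n → R)) := by
  have hv : v = ∑ i, Pi.single i (v i) := (Finset.univ_sum_single v).symm
  rw [hv]
  refine Submodule.sum_mem _ (fun i _ => ?_)
  have h2 : Pi.single i (v i) = v i • (Pi.single i (1 : R) : Fin n → R) := by
    funext j
    by_cases hji : j = i
    · subst hji; simp
    · simp [Pi.single_eq_of_ne hji]
  rw [h2]
  exact Submodule.smul_mem_smul (h i) Submodule.mem_top

theorem span_mkQ_single_top {n : ℕ} (N : Submodule R (Fin n → R)) :
    Submodule.span R (Set.range (N.mkQ ∘ (fun j : Fin n => Pi.single j (1 : R)))) = ⊤ := by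
  rw [Set.range_comp, Submodule.span_image]
  have heq : (fun j : Fin n => Pi.single j (1 : R)) = ⇑(Pi.basisFun R (Fin n)) := by
    funext j
    rw [Pi.basisFun_apply]
  rw [heq, Module.Basis.span_eq, Submodule.map_top, Submodule.range_mkQ]

theorem span_drop_top {m : ℕ} (N : Submodule R (Fin (m + 1) → R)) {v : Fin (m + 1) → R}
    (hv : v ∈ N) (i : Fin (m + 1)) (hu : IsUnit (v i)) :
    Submodule.span R (Set.range
      (N.mkQ ∘ (fun j : Fin m => Pi.single (i.succAbove j) (1 : R)))) = ⊤ := by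
  set e : Fin (m + 1) → (Fin (m + 1) → R) := fun j => Pi.single j (1 : R) with he
  set W := Submodule.span R (Set.range (N.mkQ ∘ (fun j : Fin m => e (i.succAbove j)))) with hW
  have key : ∀ j : Fin (m + 1), N.mkQ (e j) ∈ W := by
    have hne : ∀ j, j ≠ i → N.mkQ (e j) ∈ W := by
      intro j hj
      obtain ⟨t, ht⟩ : ∃ t, i.succAbove t = j := by
        have hjr : j ∈ Set.range i.succAbove := by
          rw [Fin.range_succAbove]
          exact Set.mem_compl_singleton_iff.mpr hj
        exact hjr
      refine Submodule.subset_span ⟨t, ?_⟩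
      show N.mkQ (e (i.succAbove t)) = N.mkQ (e j)
      rw [ht]
    intro j
    by_cases hj : j = i
    · subst hj
      -- mkQ v = 0 and v = ∑ v i • e i
      have hv0 : (0 : (Fin (m+1) → R) ⧸ N) = ∑ k, v k • N.mkQ (e k) := by
        have h1 : N.mkQ v = 0 := (Submodule.Quotient.mk_eq_zero N).mpr hv
        have h2 : v = ∑ k, v k • e k := by
          rw [he]
          conv_lhs => rw [← Finset.univ_sum_single v]
          refine Finset.sum_congr rfl (fun k _ => ?_)
          funext j
          by_cases hjk : j = k
          · subst hjk; simp
          · simp [Pi.single_eq_of_ne hjk]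
        calc (0 : (Fin (m+1) → R) ⧸ N) = N.mkQ v := h1.symm
          _ = N.mkQ (∑ k, v k • e k) := congrArg _ h2
          _ = ∑ k, v k • N.mkQ (e k) := by
              rw [map_sum]
              exact Finset.sum_congr rfl (fun k _ => map_smul _ _ _)
      have hsplit : v j • N.mkQ (e j) = -∑ k ∈ Finset.univ.erase j, v k • N.mkQ (e k) := by
        have hsum := Finset.sum_erase_add Finset.univ (fun k => v k • N.mkQ (e k))
          (Finset.mem_univ j)
        rw [← hsum] at hv0
        exact eq_neg_of_add_eq_zero_right hv0.symm
      have hmem : v j • N.mkQ (e j) ∈ W := by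
        rw [hsplit]
        refine Submodule.neg_mem _ (Submodule.sum_mem _ (fun k hk => ?_))
        exact Submodule.smul_mem _ _ (hne k (Finset.ne_of_mem_erase hk))
      obtain ⟨u, hu'⟩ := hu
      have : N.mkQ (e j) = (↑u⁻¹ : R) • (v j • N.mkQ (e j)) := by
        rw [smul_smul, ← hu', Units.inv_mul, one_smul]
      rw [this]
      exact Submodule.smul_mem _ _ hmem
    · exact hne j hj
  have htop := span_mkQ_single_top N
  rw [← top_le_iff, ← htop]
  rw [Submodule.span_le]
  rintro x ⟨j, rfl⟩
  exact key j

theorem mu_quot_le {n : ℕ} (N : Submodule R (Fin n → R)) :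
    mu R ((Fin n → R) ⧸ N) ≤ n :=
  Nat.sInf_le ⟨N.mkQ ∘ (fun j => Pi.single j 1), span_mkQ_single_top N⟩

theorem le_mu_quot {n : ℕ} {N : Submodule R (Fin n → R)}
    (hN : N ≤ (maximalIdeal R) • (⊤ : Submodule R (Fin n → R))) :
    n ≤ mu R ((Fin n → R) ⧸ N) := by
  refine le_csInf ⟨n, N.mkQ ∘ (fun j => Pi.single j 1), span_mkQ_single_top N⟩ ?_
  rintro k ⟨s, hs⟩
  have hlift : ∀ j : Fin k, ∃ t, N.mkQ t = s j := fun j => Submodule.Quotient.mk_surjective N (s j)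
  choose t ht using hlift
  set T := Fintype.linearCombination R t with hT
  have hsub : (⊤ : Submodule R (Fin n → R)) ≤ LinearMap.range T ⊔ (maximalIdeal R) • ⊤ := by
    intro x _
    have hteq : ⇑N.mkQ ∘ t = s := funext ht
    have hx : N.mkQ x ∈ Submodule.span R (Set.range (⇑N.mkQ ∘ t)) := by
      rw [hteq, hs]; trivial
    rw [Set.range_comp, Submodule.span_image] at hx
    obtain ⟨y, hy, hxy⟩ := Submodule.mem_map.mp hx
    have hxyN : x - y ∈ N := by
      rw [← Submodule.ker_mkQ N, LinearMap.mem_ker, map_sub, hxy, sub_self]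
    have hyr : y ∈ LinearMap.range T := by
      rw [hT, Fintype.range_linearCombination]
      exact hy
    have hxeq : x = y + (x - y) := by abel
    rw [hxeq]
    exact Submodule.add_mem _ (Submodule.mem_sup_left hyr) (Submodule.mem_sup_right (hN hxyN))
  have htop : LinearMap.range T = ⊤ :=
    le_antisymm le_top (Submodule.le_of_le_smul_of_le_jacobson_bot (IsNoetherian.noetherian ⊤)
      (IsLocalRing.maximalIdeal_le_jacobson ⊥) hsub)
  exact le_of_fin_surjective R T (LinearMap.range_eq_top.mp htop)

variable {M : Type u} [AddCommGroup M] [Module R M]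

theorem summand_of_unit_coord {n : ℕ} {f : M →ₗ[R] (Fin n → R)} {m : M} {i : Fin n}
    (hu : IsUnit (f m i)) :
    ∃ (p : M →ₗ[R] R) (s : R →ₗ[R] M), p.comp s = LinearMap.id ∧ Function.Injective s := by
  obtain ⟨v, hv⟩ := hu
  set p := (LinearMap.proj i).comp f with hp
  set s := LinearMap.toSpanSingleton R M ((↑v⁻¹ : R) • m) with hsdef
  have key : ∀ r : R, p (s r) = r := by
    intro r
    simp only [hp, hsdef, LinearMap.comp_apply, LinearMap.proj_apply,
      LinearMap.toSpanSingleton_apply, map_smul, Pi.smul_apply, smul_eq_mul, ← hv]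
    rw [Units.inv_mul, mul_one]
  exact ⟨p, s, LinearMap.ext key, Function.LeftInverse.injective key⟩

theorem ann_eq_bot_of_summand (h : HasFreeSummand R M) : Module.annihilator R M = ⊥ := by
  obtain ⟨p, s, hps⟩ := h
  rw [eq_bot_iff]
  intro a ha
  have h1 : s a = a • s 1 := by rw [← map_smul, smul_eq_mul, mul_one]
  have h2 : s a = 0 := by rw [h1, Module.mem_annihilator.mp ha (s 1)]
  have h3 := congrArg p h2
  rw [map_zero] at h3
  have h4 : p (s a) = a := LinearMap.congr_fun hps a
  rw [Submodule.mem_bot, ← h4, h3]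

end PartC

end StmtAux

open StmtAux

/-- For a local ring `R` with `depth R = 0` and a nonzero finitely generated
module `M ∈ ΩDeep(R)`, the following are equivalent: (1) `M` has a free direct summand;
(2) `M` is faithful; (3) `Soc(R) ⊄ Ann(M)`; (4) `M` is not a minimal syzygy. -/
theorem stmt_0 (R : Type u) [CommRing R] [IsNoetherianRing R] [IsLocalRing R]
    (M : Type u) [AddCommGroup M] [Module R M] [Module.Finite R M] [Nontrivial M]
    (hdepth : rdepth R R = 0) (hM : OmegaDeep R M) :
    List.TFAE
      [HasFreeSummand R M,
       Module.annihilator R M = ⊥,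
       ¬ (Submodule.annihilator (maximalIdeal R) ≤ Module.annihilator R M),
       ¬ ∃ (n : ℕ) (f : M →ₗ[R] (Fin n → R)), Function.Injective f ∧
           n = mu R ((Fin n → R) ⧸ LinearMap.range f)] := by
  obtain ⟨n, f, hfinj, -⟩ := hM
  have hsoc := StmtAux.soc_ne_bot (R := R) hdepth
  tfae_have 1 → 2 := fun h1 => ann_eq_bot_of_summand h1
  tfae_have 2 → 3 := by
    intro h2 hle
    exact hsoc (le_bot_iff.mp (h2 ▸ hle))
  tfae_have 3 → 1 := by
    intro h3
    obtain ⟨a, haSoc, haAnn⟩ := SetLike.not_le_iff_exists.mp h3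
    obtain ⟨m, hm⟩ : ∃ m : M, a • m ≠ 0 := by
      by_contra hc
      push_neg at hc
      exact haAnn (Module.mem_annihilator.mpr hc)
    have hfm : f (a • m) ≠ 0 := fun h0 => hm (hfinj (by rw [h0, map_zero]))
    obtain ⟨i, hi⟩ : ∃ i, f (a • m) i ≠ 0 := by
      by_contra hc
      push_neg at hc
      exact hfm (funext hc)
    have hunit : IsUnit (f m i) := by
      by_contra hnu
      have h𝔪 : f m i ∈ maximalIdeal R := by
        rw [IsLocalRing.mem_maximalIdeal, mem_nonunits_iff]
        exact hnu
      have hzero : a • (f m i) = 0 := Submodule.mem_annihilator.mp haSoc _ h𝔪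
      apply hi
      rw [map_smul]
      simpa [smul_eq_mul] using hzero
    obtain ⟨p, s, hps, -⟩ := summand_of_unit_coord hunit
    exact ⟨p, s, hps⟩
  tfae_have 3 → 4 := by
    intro h3
    rintro ⟨k, g, hginj, hk⟩
    have hcoords : ∀ (x : M) (i : Fin k), g x i ∈ maximalIdeal R := by
      intro x i
      by_contra hnm
      have hunit : IsUnit (g x i) := by
        by_contra hnu
        exact hnm (by rw [IsLocalRing.mem_maximalIdeal, mem_nonunits_iff]; exact hnu)
      rcases k with _ | m
      · exact i.elim0
      · have hspan := span_drop_top (LinearMap.range g) ⟨x, rfl⟩ i hunit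
        have hmem : m ∈ {j : ℕ | ∃ s : Fin j → ((Fin (m+1) → R) ⧸ LinearMap.range g),
            Submodule.span R (Set.range s) = ⊤} := ⟨_, hspan⟩
        have hle : mu R ((Fin (m+1) → R) ⧸ LinearMap.range g) ≤ m := Nat.sInf_le hmem
        rw [← hk] at hle
        omega
    obtain ⟨a, haSoc, haAnn⟩ := SetLike.not_le_iff_exists.mp h3
    obtain ⟨m0, hm0⟩ : ∃ m0 : M, a • m0 ≠ 0 := by
      by_contra hc
      push_neg at hc
      exact haAnn (Module.mem_annihilator.mpr hc)
    apply hm0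
    apply hginj
    rw [map_zero, map_smul]
    funext i
    have hz : a • (g m0 i) = 0 := Submodule.mem_annihilator.mp haSoc _ (hcoords m0 i)
    simpa [smul_eq_mul] using hz
  tfae_have 4 → 3 := by
    intro h4
    by_contra h3
    apply h4
    have hcoords : ∀ (x : M) (i : Fin n), f x i ∈ maximalIdeal R := by
      intro x i
      by_contra hnm
      have hunit : IsUnit (f x i) := by
        by_contra hnu
        exact hnm (by rw [IsLocalRing.mem_maximalIdeal, mem_nonunits_iff]; exact hnu)
      obtain ⟨p, s, hps, -⟩ := summand_of_unit_coord hunit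
      have hann := ann_eq_bot_of_summand ⟨p, s, hps⟩
      exact hsoc (le_bot_iff.mp (hann ▸ h3))
    have hNle : LinearMap.range f ≤ (maximalIdeal R) • (⊤ : Submodule R (Fin n → R)) := by
      rintro _ ⟨x, rfl⟩
      exact coord_mem_smul_top (fun i => hcoords x i)
    exact ⟨n, f, hfinj, le_antisymm (le_mu_quot hNle) (mu_quot_le _)⟩
  tfae_finish
end

section
/- Let 0 → X → Y → Z → 0 be a short exact sequence of finitely generated R-modules. If Y ∈ ΩDeep(R) and Z ∈ Deep(R), then X ∈ ΩDeep(R). -/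
set_option linter.unusedSectionVars false
set_option maxHeartbeats 1000000


universe u v

open IsLocalRing RingTheory.Sequence Submodule Pointwise

section Aux

variable {R : Type u} [CommRing R] [IsLocalRing R]

def regSet (R : Type u) [CommRing R] [IsLocalRing R]
    (M : Type v) [AddCommGroup M] [Module R M] : Set ℕ :=
  {n : ℕ | ∃ rs : List R, rs.length = n ∧ (∀ r ∈ rs, r ∈ maximalIdeal R) ∧
    RingTheory.Sequence.IsRegular M rs}

theorem colon_bot_eq_ann {M : Type v} [AddCommGroup M] [Module R M] (x : M) :
    (⊥ : Submodule R M).colon {x} = (R ∙ x).annihilator := by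
  ext r
  rw [Submodule.mem_colon_singleton, Submodule.mem_bot, Submodule.mem_annihilator_span_singleton]

theorem assoc_sub_union [IsNoetherianRing R] {M : Type v} [AddCommGroup M] [Module R M]
    (N : Submodule R M) :
    associatedPrimes R M ⊆ associatedPrimes R N ∪ associatedPrimes R (M ⧸ N) := by
  rintro p hp0
  obtain ⟨hp, x, rfl⟩ := _root_.isAssociatedPrime_iff.mp hp0
  rw [colon_bot_eq_ann] at hp ⊢
  by_cases hc : ∃ c : R, c • x ∈ N ∧ c • x ≠ 0
  · obtain ⟨c, hcN, hc0⟩ := hc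
    have hcp : c ∉ (R ∙ x).annihilator := by
      rw [Submodule.mem_annihilator_span_singleton]; exact hc0
    left
    refine _root_.isAssociatedPrime_iff.mpr ⟨hp, ⟨c • x, hcN⟩, ?_⟩
    rw [colon_bot_eq_ann]
    ext r
    rw [Submodule.mem_annihilator_span_singleton, Submodule.mem_annihilator_span_singleton]
    constructor
    · intro hr
      apply Subtype.ext
      show r • (c • x) = 0
      rw [smul_comm, hr, smul_zero]
    · intro hr
      have : (r * c) • x = 0 := by
        have := congrArg (Subtype.val) hr
        simpa [mul_smul] using this
      have hmem : r * c ∈ (R ∙ x).annihilator := by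
        rw [Submodule.mem_annihilator_span_singleton]; exact this
      rcases hp.mem_or_mem hmem with h | h
      · rwa [Submodule.mem_annihilator_span_singleton] at h
      · exact absurd ((Submodule.mem_annihilator_span_singleton _ _).mp h) hc0
  · push_neg at hc
    right
    refine _root_.isAssociatedPrime_iff.mpr ⟨hp, Submodule.Quotient.mk x, ?_⟩
    rw [colon_bot_eq_ann]
    ext r
    rw [Submodule.mem_annihilator_span_singleton, Submodule.mem_annihilator_span_singleton,
      ← Submodule.Quotient.mk_smul, Submodule.Quotient.mk_eq_zero]
    constructor
    · intro hr; rw [hr]; exact N.zero_mem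
    · intro hr; exact hc r hr


theorem assoc_quot_finite [IsNoetherianRing R] (M : Type v) [AddCommGroup M] [Module R M]
    [Module.Finite R M] (N : Submodule R M) : (associatedPrimes R (M ⧸ N)).Finite := by
  induction N using WellFoundedGT.induction with
  | _ N ih =>
  rcases subsingleton_or_nontrivial (M ⧸ N) with hs | hnt
  · rw [associatedPrimes.eq_empty_of_subsingleton]; exact Set.finite_empty
  · obtain ⟨p, hp0⟩ := associatedPrimes.nonempty R (M ⧸ N)
    obtain ⟨hp, xbar, hx⟩ := _root_.isAssociatedPrime_iff.mp hp0
    rw [colon_bot_eq_ann] at hx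
    obtain ⟨y, rfl⟩ := N.mkQ_surjective xbar
    have hy : y ∉ N := by
      intro hy
      apply hp.ne_top
      rw [hx, Submodule.annihilator_eq_top_iff]
      rw [Submodule.span_singleton_eq_bot, N.mkQ_apply, Submodule.Quotient.mk_eq_zero]
      exact hy
    -- the submodule spanned by the image of y
    set T : Submodule R (M ⧸ N) := R ∙ (N.mkQ y) with hT
    have hsub := assoc_sub_union T
    have h1 : (associatedPrimes R T).Finite := by
      -- T ≅ R ⧸ p
      have hker : LinearMap.ker (LinearMap.toSpanSingleton R (M ⧸ N) (N.mkQ y)) = p := by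
        ext r
        rw [LinearMap.mem_ker, hx, Submodule.mem_annihilator_span_singleton]
        rfl
      have e : (R ⧸ p) ≃ₗ[R] T := by
        refine (Submodule.quotEquivOfEq _ _ hker.symm) ≪≫ₗ
          ((LinearMap.toSpanSingleton R (M ⧸ N) (N.mkQ y)).quotKerEquivRange) ≪≫ₗ
          (LinearEquiv.ofEq _ _ ?_)
        rw [hT, LinearMap.span_singleton_eq_range]
      rw [← LinearEquiv.AssociatedPrimes.eq e, associatedPrimes.eq_singleton_of_isPrimary
        (hp.isPrimary)]
      exact Set.finite_singleton _
    have h2 : (associatedPrimes R ((M ⧸ N) ⧸ T)).Finite := by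
      have hmap : T = (R ∙ y).map N.mkQ := by
        rw [hT, Submodule.map_span, Set.image_singleton]
      have e : ((M ⧸ N) ⧸ T) ≃ₗ[R] (M ⧸ (N ⊔ R ∙ y)) := by
        refine (Submodule.quotEquivOfEq _ _ hmap) ≪≫ₗ
          Submodule.quotientQuotientEquivQuotientSup N (R ∙ y)
      rw [← LinearEquiv.AssociatedPrimes.eq e.symm] at *
      · exact ih (N ⊔ R ∙ y) (lt_of_le_of_ne le_sup_left (by
          intro h
          exact hy (h ▸ Submodule.mem_sup_right (Submodule.mem_span_singleton_self y))))
    exact ((h1.union h2).subset hsub)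

theorem assoc_finite [IsNoetherianRing R] (M : Type v) [AddCommGroup M] [Module R M]
    [Module.Finite R M] : (associatedPrimes R M).Finite := by
  have e : (M ⧸ (⊥ : Submodule R M)) ≃ₗ[R] M := Submodule.quotEquivOfEqBot _ rfl
  rw [← LinearEquiv.AssociatedPrimes.eq e]
  exact assoc_quot_finite M ⊥


theorem not_assoc_max_of_regular [IsNoetherianRing R] {M : Type v} [AddCommGroup M] [Module R M] {r : R}
    (hr : r ∈ maximalIdeal R) (hreg : IsSMulRegular M r) :
    maximalIdeal R ∉ associatedPrimes R M := by
  intro hp0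
  obtain ⟨hp, x, hx⟩ := _root_.isAssociatedPrime_iff.mp hp0
  rw [colon_bot_eq_ann] at hx
  have h0 : r • x = 0 := by
    have : r ∈ (R ∙ x).annihilator := hx ▸ hr
    rwa [Submodule.mem_annihilator_span_singleton] at this
  have hx0 : x = 0 := hreg (by simpa using h0)
  apply hp.ne_top
  rw [hx, hx0, Submodule.span_singleton_eq_bot.mpr rfl, Submodule.annihilator_bot]

theorem exists_common_regular [IsNoetherianRing R]
    (A : Type v) [AddCommGroup A] [Module R A] [Module.Finite R A]
    (B : Type v) [AddCommGroup B] [Module R B] [Module.Finite R B]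
    (hA : maximalIdeal R ∉ associatedPrimes R A)
    (hB : maximalIdeal R ∉ associatedPrimes R B) :
    ∃ r ∈ maximalIdeal R, IsSMulRegular A r ∧ IsSMulRegular B r := by
  have hfin : (associatedPrimes R A ∪ associatedPrimes R B).Finite :=
    (assoc_finite A).union (assoc_finite B)
  have hnotsub : ¬ ((maximalIdeal R : Set R) ⊆
      ⋃ p ∈ ((hfin.toFinset : Finset (Ideal R)) : Set (Ideal R)), (p : Set R)) := by
    rw [Ideal.subset_union_prime ⊥ ⊥ (fun p hp _ _ => ?_)]
    · rintro ⟨p, hp, hle⟩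
      rw [Set.Finite.mem_toFinset] at hp
      have hple : p ≤ maximalIdeal R := by
        apply IsLocalRing.le_maximalIdeal
        exact (by
          rcases hp with h | h
          · exact h.isPrime.ne_top
          · exact h.isPrime.ne_top)
      have : p = maximalIdeal R := le_antisymm hple hle
      rcases hp with h | h
      · exact hA (this ▸ h)
      · exact hB (this ▸ h)
    · rw [Set.Finite.mem_toFinset] at hp
      rcases hp with h | h
      · exact h.isPrime
      · exact h.isPrime
  rw [Set.not_subset] at hnotsub
  obtain ⟨r, hrm, hrn⟩ := hnotsub
  refine ⟨r, hrm, ?_, ?_⟩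
  · have := biUnion_associatedPrimes_eq_compl_regular R A
    by_contra hcon
    apply hrn
    have hmem : r ∈ ⋃ p ∈ associatedPrimes R A, (p : Set R) := by
      rw [this]; exact hcon
    rw [Set.mem_iUnion₂] at hmem
    obtain ⟨p, hp, hrp⟩ := hmem
    exact Set.mem_biUnion (hfin.mem_toFinset.mpr (Or.inl hp)) hrp
  · have := biUnion_associatedPrimes_eq_compl_regular R B
    by_contra hcon
    apply hrn
    have hmem : r ∈ ⋃ p ∈ associatedPrimes R B, (p : Set R) := by
      rw [this]; exact hcon
    rw [Set.mem_iUnion₂] at hmem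
    obtain ⟨p, hp, hrp⟩ := hmem
    exact Set.mem_biUnion (hfin.mem_toFinset.mpr (Or.inr hp)) hrp

theorem quotSMulTop_nontrivial {M : Type v} [AddCommGroup M] [Module R M] [Module.Finite R M]
    [Nontrivial M] {r : R} (hr : r ∈ maximalIdeal R) :
    Nontrivial (QuotSMulTop r M) := by
  apply Submodule.Quotient.nontrivial_iff.mpr
  intro h
  have hann : Module.annihilator R M ≠ ⊤ := by
    intro h'
    rw [← Submodule.annihilator_top, Submodule.annihilator_eq_top_iff] at h'
    have : Subsingleton M := subsingleton_iff_forall_eq 0 |>.mpr (fun x => by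
      have : x ∈ (⊤ : Submodule R M) := trivial
      rw [h'] at this; simpa using this)
    exact not_subsingleton M this
  have hjac : Ideal.span {r} ≤ (Module.annihilator R M).jacobson := by
    rw [IsLocalRing.jacobson_eq_maximalIdeal _ hann]
    rwa [Ideal.span_le, Set.singleton_subset_iff]
  exact Submodule.top_ne_ideal_smul_of_le_jacobson_annihilator hjac
    (by rw [Submodule.ideal_span_singleton_smul, h])


lemma mem_smul_top_iff_exists {M : Type v} [AddCommGroup M] [Module R M] (r : R) (x : M) :
    x ∈ r • (⊤ : Submodule R M) ↔ ∃ y, r • y = x := by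
  rw [← SetLike.mem_coe, Submodule.coe_pointwise_smul]
  constructor
  · rintro ⟨y, -, rfl⟩; exact ⟨y, rfl⟩
  · rintro ⟨y, rfl⟩; exact ⟨y, trivial, rfl⟩

theorem not_assoc_max_quot [IsNoetherianRing R] {M : Type v} [AddCommGroup M] [Module R M] {x y r : R}
    (hx : x ∈ maximalIdeal R) (hy : y ∈ maximalIdeal R)
    (hxy : IsWeaklyRegular M [x, y]) (hr : IsSMulRegular M r) :
    maximalIdeal R ∉ associatedPrimes R (QuotSMulTop r M) := by
  rw [isWeaklyRegular_cons_iff, isWeaklyRegular_cons_iff] at hxy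
  obtain ⟨hxreg, hyreg, -⟩ := hxy
  intro hp0
  obtain ⟨hp, z, hz⟩ := _root_.isAssociatedPrime_iff.mp hp0
  rw [colon_bot_eq_ann] at hz
  obtain ⟨m, rfl⟩ := (r • (⊤ : Submodule R M)).mkQ_surjective z
  -- x • m and y • m lie in r • ⊤
  have hsm : ∀ c : R, c ∈ maximalIdeal R → ∃ a : M, r • a = c • m := by
    intro c hc
    have : c • ((r • (⊤ : Submodule R M)).mkQ m) = 0 := by
      have : c ∈ (R ∙ ((r • (⊤ : Submodule R M)).mkQ m)).annihilator := hz ▸ hc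
      rwa [Submodule.mem_annihilator_span_singleton] at this
    rw [← map_smul, Submodule.mkQ_apply, Submodule.Quotient.mk_eq_zero,
      mem_smul_top_iff_exists] at this
    exact this
  obtain ⟨a, ha⟩ := hsm x hx
  obtain ⟨b, hb⟩ := hsm y hy
  have key : y • a = x • b := by
    apply hr
    show r • (y • a) = r • (x • b)
    rw [smul_comm r y, ha, smul_comm r x, hb, smul_comm y x]
  have hmem : y • ((x • (⊤ : Submodule R M)).mkQ a) = 0 := by
    rw [← map_smul, Submodule.mkQ_apply, Submodule.Quotient.mk_eq_zero,
      mem_smul_top_iff_exists]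
    exact ⟨b, key.symm⟩
  have h0 := hyreg.right_eq_zero_of_smul hmem
  rw [Submodule.mkQ_apply, Submodule.Quotient.mk_eq_zero, mem_smul_top_iff_exists] at h0
  obtain ⟨c, rfl⟩ := h0
  have hsub : x • (m - r • c) = 0 := by
    rw [smul_sub, ← ha, smul_comm r x]
    abel
  have hm : m = r • c := sub_eq_zero.mp (hxreg.right_eq_zero_of_smul hsub)
  have hz0 : (r • (⊤ : Submodule R M)).mkQ m = 0 := by
    rw [Submodule.mkQ_apply, Submodule.Quotient.mk_eq_zero, hm]
    exact Submodule.smul_mem_pointwise_smul c r ⊤ trivial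
  apply hp.ne_top
  rw [hz, hz0, Submodule.span_singleton_eq_bot.mpr rfl, Submodule.annihilator_bot]

lemma ofList_singleton_smul {M : Type v} [AddCommGroup M] [Module R M] (z : R) :
    (Ideal.ofList [z] • ⊤ : Submodule R M) = z • ⊤ := by
  rw [Ideal.ofList_singleton, Submodule.ideal_span_singleton_smul]

lemma ofList_pair_smul_comm {M : Type v} [AddCommGroup M] [Module R M] (r z : R) :
    (Ideal.ofList [r, z] • ⊤ : Submodule R M) = Ideal.ofList [z, r] • ⊤ := by
  simp only [Ideal.ofList_cons_smul, Ideal.ofList_nil, bot_smul, sup_bot_eq]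
  exact sup_comm _ _

noncomputable def swapQuot (M : Type v) [AddCommGroup M] [Module R M] (r z : R) :
    QuotSMulTop z (QuotSMulTop r M) ≃ₗ[R] QuotSMulTop r (QuotSMulTop z M) :=
  (Submodule.quotEquivOfEq _ _ (ofList_singleton_smul z)).symm ≪≫ₗ
  (Submodule.quotOfListConsSMulTopEquivQuotSMulTopInner M r [z]).symm ≪≫ₗ
  (Submodule.quotEquivOfEq _ _ (ofList_pair_smul_comm r z)) ≪≫ₗ
  (Submodule.quotOfListConsSMulTopEquivQuotSMulTopInner M z [r]) ≪≫ₗ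
  (Submodule.quotEquivOfEq _ _ (ofList_singleton_smul r))


theorem exists_shorter [IsNoetherianRing R] (n : ℕ) :
    ∀ (M : Type v) [AddCommGroup M] [Module R M] [Module.Finite R M] (r : R),
    r ∈ maximalIdeal R → IsSMulRegular M r → (n ∈ regSet R M) →
    (n - 1) ∈ regSet R (QuotSMulTop r M) := by
  induction n with
  | zero =>
    intro M _ _ _ r hrm hrreg hmem
    obtain ⟨rs, hlen, hsub, hreg⟩ := hmem
    haveI := hreg.nontrivial
    haveI := quotSMulTop_nontrivial (M := M) hrm
    exact ⟨[], rfl, by simp, IsRegular.nil R _⟩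
  | succ n ih =>
    intro M _ _ _ r hrm hrreg hmem
    obtain ⟨rs0, hlen, hsub, hreg⟩ := hmem
    haveI hMnt := hreg.nontrivial
    rcases Nat.eq_zero_or_pos n with rfl | hn
    · haveI := quotSMulTop_nontrivial (M := M) hrm
      exact ⟨[], rfl, by simp, IsRegular.nil R _⟩
    -- n ≥ 1, so rs0 has at least two elements
    obtain ⟨x, y, rest, rfl⟩ : ∃ x y rest, rs0 = x :: y :: rest := by
      rcases rs0 with _ | ⟨x, _ | ⟨y, rest⟩⟩
      · simp at hlen
      · simp at hlen; omega
      · exact ⟨_, _, _, rfl⟩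
    have hwr := hreg.toIsWeaklyRegular
    have hxy2 : IsWeaklyRegular M [x, y] := by
      have := (isWeaklyRegular_append_iff M [x, y] rest).mp (by exact hwr)
      exact this.1
    set xs := (x :: y :: rest).take n with hxs
    have hxslen : xs.length = n := by
      rw [hxs, List.length_take, hlen]; omega
    clear_value xs
    have hxssub : ∀ a ∈ xs, a ∈ maximalIdeal R := fun a ha =>
      hsub a (List.take_subset _ _ (hxs ▸ ha : a ∈ (x :: y :: rest).take n))
    obtain ⟨w, hw⟩ : ∃ w, (x :: y :: rest).drop n = [w] := by
      rw [List.length_eq_one_iff.symm, List.length_drop, hlen]; omega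
    have hwmem : w ∈ maximalIdeal R := hsub w (List.drop_subset _ _ (by rw [hw]; simp))
    have happ := (isWeaklyRegular_append_iff M xs ((x :: y :: rest).drop n)).mp
      (by rw [hxs, List.take_append_drop]; exact hwr)
    have hwr1 : IsWeaklyRegular M xs := happ.1
    have hwreg : IsSMulRegular (M ⧸ (Ideal.ofList xs • ⊤ : Submodule R M)) w := by
      have := happ.2
      rw [hw, isWeaklyRegular_singleton_iff] at this
      exact this
    -- pick common regular element z
    have hA := not_assoc_max_quot (hsub x (List.mem_cons_self))
      (hsub y (List.mem_cons_of_mem _ (List.mem_cons_self))) hxy2 hrreg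
    have hB := not_assoc_max_of_regular hwmem hwreg
    obtain ⟨z, hzm, hzA, hzB⟩ := exists_common_regular (QuotSMulTop r M)
      (M ⧸ (Ideal.ofList xs • ⊤ : Submodule R M)) hA hB
    -- xs ++ [z] is weakly regular on M
    have hWRapp : IsWeaklyRegular M (xs ++ [z]) :=
      (isWeaklyRegular_append_iff M xs [z]).mpr
        ⟨hwr1, (isWeaklyRegular_singleton_iff _ z).mpr hzB⟩
    have hmemapp : ∀ a ∈ xs ++ [z], a ∈ maximalIdeal R := by
      intro a ha
      rcases List.mem_append.mp ha with h | h
      · exact hxssub a h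
      · simp at h; subst h; exact hzm
    have hzxs : IsWeaklyRegular M (z :: xs) :=
      IsLocalRing.isWeaklyRegular_of_perm_of_subset_maximalIdeal hWRapp
        (List.perm_append_singleton z xs) hmemapp
    have hxs_qz : IsWeaklyRegular (QuotSMulTop z M) xs :=
      ((isWeaklyRegular_cons_iff M z xs).mp hzxs).2
    -- r is regular on M ⧸ zM
    have hrz : IsWeaklyRegular M [r, z] :=
      IsWeaklyRegular.cons hrreg ((isWeaklyRegular_singleton_iff _ z).mpr hzA)
    have hzr : IsWeaklyRegular M [z, r] :=
      IsLocalRing.isWeaklyRegular_of_perm_of_subset_maximalIdeal hrz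
        (List.Perm.swap z r []) (by
          intro a ha
          rcases List.mem_cons.mp ha with h | h
          · subst h; exact hrm
          · simp at h; subst h; exact hzm)
    have hr_qz : IsSMulRegular (QuotSMulTop z M) r := by
      have := ((isWeaklyRegular_cons_iff M z [r]).mp hzr).2
      rwa [isWeaklyRegular_singleton_iff] at this
    -- xs is a regular sequence on M ⧸ zM
    haveI := quotSMulTop_nontrivial (M := M) hzm
    have hxsreg : RingTheory.Sequence.IsRegular (QuotSMulTop z M) xs := by
      rw [IsLocalRing.isRegular_iff_isWeaklyRegular_of_subset_maximalIdeal hxssub]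
      exact hxs_qz
    have hmem' : n ∈ regSet R (QuotSMulTop z M) := ⟨xs, hxslen, hxssub, hxsreg⟩
    obtain ⟨ys, hyslen, hyssub, hysreg⟩ := ih (QuotSMulTop z M) r hrm hr_qz hmem'
    have hysreg' : RingTheory.Sequence.IsRegular (QuotSMulTop z (QuotSMulTop r M)) ys :=
      ((swapQuot M r z).isRegular_congr ys).mpr hysreg
    refine ⟨z :: ys, by rw [List.length_cons, hyslen]; omega, ?_, IsRegular.cons hzA hysreg'⟩
    intro a ha
    rcases List.mem_cons.mp ha with h | h
    · subst h; exact hzm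
    · exact hyssub a h


theorem exists_common_seq [IsNoetherianRing R] (n : ℕ) :
    ∀ (A : Type v) [AddCommGroup A] [Module R A] [Module.Finite R A]
      (B : Type v) [AddCommGroup B] [Module R B] [Module.Finite R B],
    n ∈ regSet R A → n ∈ regSet R B →
    ∃ rs : List R, rs.length = n ∧ (∀ r ∈ rs, r ∈ maximalIdeal R) ∧
      RingTheory.Sequence.IsRegular A rs ∧ RingTheory.Sequence.IsRegular B rs := by
  induction n with
  | zero =>
    intro A _ _ _ B _ _ _ hA hB
    obtain ⟨rsA, -, -, hregA⟩ := hA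
    obtain ⟨rsB, -, -, hregB⟩ := hB
    haveI := hregA.nontrivial
    haveI := hregB.nontrivial
    exact ⟨[], rfl, by simp, IsRegular.nil R _, IsRegular.nil R _⟩
  | succ n ih =>
    intro A _ _ _ B _ _ _ hA hB
    have hAnt : maximalIdeal R ∉ associatedPrimes R A := by
      obtain ⟨rs, hlen, hsub, hreg⟩ := hA
      rcases rs with _ | ⟨a, rs⟩
      · simp at hlen
      · exact not_assoc_max_of_regular (hsub a (List.mem_cons_self))
          ((isRegular_cons_iff A a rs).mp hreg).1
    have hBnt : maximalIdeal R ∉ associatedPrimes R B := by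
      obtain ⟨rs, hlen, hsub, hreg⟩ := hB
      rcases rs with _ | ⟨a, rs⟩
      · simp at hlen
      · exact not_assoc_max_of_regular (hsub a (List.mem_cons_self))
          ((isRegular_cons_iff B a rs).mp hreg).1
    obtain ⟨z, hzm, hzA, hzB⟩ := exists_common_regular A B hAnt hBnt
    have hA' := exists_shorter (n + 1) A z hzm hzA hA
    have hB' := exists_shorter (n + 1) B z hzm hzB hB
    simp only [Nat.add_sub_cancel] at hA' hB'
    obtain ⟨rs, hlen, hsub, hregA, hregB⟩ := ih (QuotSMulTop z A) (QuotSMulTop z B) hA' hB'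
    refine ⟨z :: rs, by simp [hlen], ?_, IsRegular.cons hzA hregA, IsRegular.cons hzB hregB⟩
    intro a ha
    rcases List.mem_cons.mp ha with h | h
    · subst h; exact hzm
    · exact hsub a h

theorem regSet_bddAbove_aux [IsNoetherianRing R] (J : Ideal R) :
    ∀ (M : Type v) [AddCommGroup M] [Module R M] [Module.Finite R M],
    Module.annihilator R M = J → BddAbove (regSet R M) := by
  induction J using WellFoundedGT.induction with
  | _ J ih =>
  intro M _ _ _ hJ
  by_cases hnt : Nontrivial M
  · by_cases hpos : ∃ k ∈ regSet R M, 0 < k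
    · obtain ⟨k, ⟨rs, hlen, hsub, hreg⟩, hkpos⟩ := hpos
      rcases rs with _ | ⟨x, rs⟩
      · simp at hlen; omega
      have hxm : x ∈ maximalIdeal R := hsub x (List.mem_cons_self)
      have hxreg : IsSMulRegular M x := ((isRegular_cons_iff M x rs).mp hreg).1
      -- annihilator strictly grows
      have hlt : J < Module.annihilator R (QuotSMulTop x M) := by
        rw [← hJ]
        refine lt_of_le_of_ne (fun a ha => ?_) (fun h => ?_)
        · rw [Module.mem_annihilator] at ha ⊢
          intro q
          obtain ⟨m, rfl⟩ := (x • (⊤ : Submodule R M)).mkQ_surjective q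
          rw [← map_smul, ha m, map_zero]
        · have hxmem : x ∈ Module.annihilator R M := by
            rw [h, Module.mem_annihilator]
            intro q
            obtain ⟨m, rfl⟩ := (x • (⊤ : Submodule R M)).mkQ_surjective q
            rw [← map_smul, Submodule.mkQ_apply, Submodule.Quotient.mk_eq_zero]
            exact Submodule.smul_mem_pointwise_smul m x ⊤ trivial
          rw [Module.mem_annihilator] at hxmem
          obtain ⟨m, hm⟩ := exists_ne (0 : M)
          exact hm (hxreg (show x • m = x • 0 by rw [hxmem m, smul_zero]))
      obtain ⟨c, hc⟩ := ih _ hlt (QuotSMulTop x M) rfl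
      refine ⟨c + 1, fun k hk => ?_⟩
      rcases Nat.eq_zero_or_pos k with rfl | hk1
      · omega
      · have := exists_shorter k M x hxm hxreg hk
        have := hc this
        omega
    · push_neg at hpos
      exact ⟨0, fun k hk => hpos k hk⟩
  · refine ⟨0, fun k hk => ?_⟩
    obtain ⟨rs, hlen, hsub, hreg⟩ := hk
    exact absurd hreg.nontrivial hnt

theorem regSet_bddAbove [IsNoetherianRing R]
    (M : Type v) [AddCommGroup M] [Module R M] [Module.Finite R M] :
    BddAbove (regSet R M) :=
  regSet_bddAbove_aux (Module.annihilator R M) M rfl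


theorem weaklyRegular_of_sub_quot (rs : List R) :
    ∀ (Q : Type v) [AddCommGroup Q] [Module R Q] (N : Submodule R Q),
    IsWeaklyRegular N rs → IsWeaklyRegular (Q ⧸ N) rs → IsWeaklyRegular Q rs := by
  induction rs with
  | nil => intro Q _ _ N _ _; exact IsWeaklyRegular.nil R Q
  | cons r rs ih =>
    intro Q _ _ N hN hQN
    rw [isWeaklyRegular_cons_iff] at hN hQN ⊢
    obtain ⟨hrN, hN'⟩ := hN
    obtain ⟨hrQN, hQN'⟩ := hQN
    have hrQ : IsSMulRegular Q r :=
      isSMulRegular_of_isSMulRegular_on_submodule_on_quotient hrN hrQN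
    refine ⟨hrQ, ?_⟩
    -- set up the submodule N' in Q ⧸ rQ
    set mk := (r • (⊤ : Submodule R Q)).mkQ with hmk
    set N' : Submodule R (QuotSMulTop r Q) := N.map mk with hN'def
    -- iso 1 : QuotSMulTop r N ≃ N'
    have hker : (r • (⊤ : Submodule R N) : Submodule R N) =
        LinearMap.ker (mk.comp N.subtype) := by
      ext n
      rw [LinearMap.mem_ker, LinearMap.comp_apply, hmk, Submodule.mkQ_apply,
        Submodule.Quotient.mk_eq_zero, mem_smul_top_iff_exists, mem_smul_top_iff_exists]
      constructor
      · rintro ⟨y, rfl⟩; exact ⟨(y : Q), rfl⟩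
      · rintro ⟨q, hq⟩
        have hqN : q ∈ N := by
          have : r • (N.mkQ q) = 0 := by
            rw [← map_smul, hq, Submodule.mkQ_apply, Submodule.Quotient.mk_eq_zero]
            exact n.2
          have := hrQN.right_eq_zero_of_smul this
          rwa [Submodule.mkQ_apply, Submodule.Quotient.mk_eq_zero] at this
        refine ⟨⟨q, hqN⟩, ?_⟩
        apply Subtype.ext
        exact hq
    have e1 : QuotSMulTop r (↥N) ≃ₗ[R] ↥N' := by
      refine (Submodule.quotEquivOfEq _ _ hker) ≪≫ₗ
        ((mk.comp N.subtype).quotKerEquivRange) ≪≫ₗ (LinearEquiv.ofEq _ _ ?_)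
      rw [LinearMap.range_comp, Submodule.range_subtype, hN'def]
    -- iso 2 : (QuotSMulTop r Q) ⧸ N' ≃ QuotSMulTop r (Q ⧸ N)
    have e2 : ((QuotSMulTop r Q) ⧸ N') ≃ₗ[R] QuotSMulTop r (Q ⧸ N) := by
      refine (Submodule.quotientQuotientEquivQuotientSup (r • ⊤) N) ≪≫ₗ
        (Submodule.quotEquivOfEq _ _ (sup_comm _ _)) ≪≫ₗ
        (Submodule.quotientQuotientEquivQuotientSup N (r • ⊤)).symm ≪≫ₗ
        (Submodule.quotEquivOfEq _ _ ?_)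
      rw [Submodule.map_pointwise_smul, Submodule.map_top, Submodule.range_mkQ]
    exact ih (QuotSMulTop r Q) N' (e1.isWeaklyRegular_congr rs |>.mp hN')
      (e2.isWeaklyRegular_congr rs |>.mpr hQN')


end Aux

section Final

variable {R : Type u} [CommRing R] [IsLocalRing R]

theorem rdepth_eq_sSup (M : Type u) [AddCommGroup M] [Module R M] :
    rdepth R M = sSup (regSet R M) := rfl

theorem mem_regSet_of_le_rdepth [IsNoetherianRing R] {M : Type u} [AddCommGroup M] [Module R M]
    [Module.Finite R M] {t : ℕ} (ht : 0 < t) (h : t ≤ rdepth R M) : t ∈ regSet R M := by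
  rw [rdepth_eq_sSup] at h
  have hbdd := regSet_bddAbove (R := R) M
  have hne : (regSet R M).Nonempty := by
    by_contra hempty
    rw [Set.not_nonempty_iff_eq_empty] at hempty
    rw [hempty, csSup_empty] at h
    have h0 : t ≤ 0 := h
    omega
  obtain ⟨rs, hlen, hsub, hreg⟩ := Nat.sSup_mem hne hbdd
  have htle : t ≤ rs.length := by rw [hlen]; exact h
  haveI := hreg.nontrivial
  refine ⟨rs.take t, by rw [List.length_take]; omega,
    fun a ha => hsub a (List.take_subset _ _ ha), ?_⟩
  rw [IsLocalRing.isRegular_iff_isWeaklyRegular_of_subset_maximalIdeal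
    (fun a ha => hsub a (List.take_subset _ _ ha))]
  have := hreg.toIsWeaklyRegular
  rw [← List.take_append_drop t rs] at this
  exact ((isWeaklyRegular_append_iff M _ _).mp this).1

theorem le_rdepth_of_mem_regSet [IsNoetherianRing R] {M : Type u} [AddCommGroup M] [Module R M]
    [Module.Finite R M] {t : ℕ} (h : t ∈ regSet R M) : t ≤ rdepth R M :=
  le_csSup (regSet_bddAbove (R := R) M) h

end Final

/-- Given a short exact sequence `0 → X → Y → Z → 0` of finitely generated
modules over a Noetherian local ring, if `Y ∈ ΩDeep(R)` and `Z ∈ Deep(R)` then `X ∈ ΩDeep(R)`. -/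
theorem stmt_1 (R : Type u) [CommRing R] [IsNoetherianRing R] [IsLocalRing R]
    (X Y Z : Type u) [AddCommGroup X] [Module R X] [Module.Finite R X]
    [AddCommGroup Y] [Module R Y] [Module.Finite R Y]
    [AddCommGroup Z] [Module R Z] [Module.Finite R Z]
    (f : X →ₗ[R] Y) (g : Y →ₗ[R] Z)
    (hf : Function.Injective f) (hg : Function.Surjective g)
    (hfg : LinearMap.range f = LinearMap.ker g)
    (hY : OmegaDeep R Y) (hZ : Deep R Z) :
    OmegaDeep R X := by
  obtain ⟨n, e, he, hCfin, hCd⟩ := hY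
  haveI := hCfin
  set j : X →ₗ[R] (Fin n → R) := e.comp f with hj
  refine ⟨n, j, he.comp hf, inferInstance, ?_⟩
  rcases Nat.eq_zero_or_pos (rdepth R R) with h0 | ht
  · rw [h0]; exact Nat.zero_le _
  -- extract regular sequences of length t on Z and on C
  have hZt : rdepth R R ∈ regSet R Z := mem_regSet_of_le_rdepth ht hZ.2
  have hCt : rdepth R R ∈ regSet R ((Fin n → R) ⧸ LinearMap.range e) :=
    mem_regSet_of_le_rdepth ht hCd
  obtain ⟨rs, hlen, hsub, hregZ, hregC⟩ :=
    exists_common_seq (rdepth R R) Z ((Fin n → R) ⧸ LinearMap.range e) hZt hCt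
  -- the submodule N of (Fin n → R) ⧸ range j
  let N : Submodule R ((Fin n → R) ⧸ LinearMap.range j) :=
    (LinearMap.range e).map (LinearMap.range j).mkQ
  let ψ : Y →ₗ[R] ((Fin n → R) ⧸ LinearMap.range j) :=
    (LinearMap.range j).mkQ.comp e
  have hrangeψ : LinearMap.range ψ = N := LinearMap.range_comp e _
  have hkerψ : LinearMap.ker ψ = LinearMap.ker g := by
    show LinearMap.ker ((LinearMap.range j).mkQ.comp e) = LinearMap.ker g
    rw [LinearMap.ker_comp, Submodule.ker_mkQ, ← hfg]
    have : LinearMap.range j = Submodule.map e (LinearMap.range f) := by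
      rw [hj, LinearMap.range_comp]
    rw [this]
    exact Submodule.comap_map_eq_of_injective he _
  have eZ : Z ≃ₗ[R] ↥N :=
    (g.quotKerEquivOfSurjective hg).symm ≪≫ₗ
    (Submodule.quotEquivOfEq _ _ hkerψ.symm) ≪≫ₗ
    ψ.quotKerEquivRange ≪≫ₗ (LinearEquiv.ofEq _ _ hrangeψ)
  have hje : LinearMap.range j ≤ LinearMap.range e := by
    rw [hj]; exact LinearMap.range_comp_le_range f e
  have eC : (((Fin n → R) ⧸ LinearMap.range j) ⧸ N) ≃ₗ[R]
      ((Fin n → R) ⧸ LinearMap.range e) :=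
    Submodule.quotientQuotientEquivQuotientSup (LinearMap.range j) (LinearMap.range e) ≪≫ₗ
    Submodule.quotEquivOfEq _ _ (sup_eq_right.mpr hje)
  -- transfer regularity
  have hWRN : IsWeaklyRegular (↥N) rs :=
    (eZ.isWeaklyRegular_congr rs).mp hregZ.toIsWeaklyRegular
  have hWRQ : IsWeaklyRegular ((((Fin n → R) ⧸ LinearMap.range j)) ⧸ N) rs :=
    (eC.isWeaklyRegular_congr rs).mpr hregC.toIsWeaklyRegular
  have hWR : IsWeaklyRegular ((Fin n → R) ⧸ LinearMap.range j) rs :=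
    weaklyRegular_of_sub_quot rs _ N hWRN hWRQ
  -- nontriviality
  haveI hZnt : Nontrivial Z := hregZ.nontrivial
  haveI hNnt : Nontrivial ↥N := eZ.symm.toEquiv.nontrivial
  haveI : Nontrivial ((Fin n → R) ⧸ LinearMap.range j) := by
    obtain ⟨a, b, hab⟩ := hNnt
    exact ⟨(a : _), (b : _), fun h => hab (Subtype.ext h)⟩
  have hreg : RingTheory.Sequence.IsRegular ((Fin n → R) ⧸ LinearMap.range j) rs := by
    rw [IsLocalRing.isRegular_iff_isWeaklyRegular_of_subset_maximalIdeal hsub]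
    exact hWR
  exact le_rdepth_of_mem_regSet ⟨rs, hlen, hsub, hreg⟩
end

section
/- Let 0 → X → Y → Z → 0 be a short exact sequence of finitely generated R-modules. If X ∈ DF(R) and Z ∈ Deep(R), then Y ∈ DF(R). -/
universe u

open IsLocalRing

section AuxDev

open IsLocalRing RingTheory.Sequence Pointwise Submodule

namespace StmtAux

section Basic
variable {R : Type u} [CommRing R]

lemma aux_take {M : Type*} [AddCommGroup M] [Module R M] {rs : List R}
    (h : IsRegular M rs) (m : ℕ) : IsRegular M (rs.take m) := by
  have hw : IsWeaklyRegular M (rs.take m) := by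
    have := h.toIsWeaklyRegular
    rw [← List.take_append_drop m rs, isWeaklyRegular_append_iff] at this
    exact this.1
  refine ⟨hw, fun htop => h.top_ne_smul ?_⟩
  have hle : Ideal.ofList (rs.take m) ≤ Ideal.ofList rs := by
    conv_rhs => rw [← List.take_append_drop m rs]
    rw [Ideal.ofList_append]; exact le_sup_left
  exact le_antisymm (htop.le.trans (Submodule.smul_mono_left hle)) le_top

lemma aux_notreg {M : Type*} [AddCommGroup M] [Module R M] {r : R}
    (h : ¬ IsSMulRegular M r) : ∃ x : M, x ≠ 0 ∧ r • x = 0 := by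
  rw [IsSMulRegular, Function.Injective] at h
  push_neg at h
  obtain ⟨a, b, hab, hne⟩ := h
  exact ⟨a - b, sub_ne_zero.mpr hne, by rw [smul_sub, hab, sub_self]⟩


lemma aux_ass_ses [IsNoetherianRing R] {M : Type*} [AddCommGroup M] [Module R M] (N : Submodule R M) :
    associatedPrimes R M ⊆ associatedPrimes R N ∪ associatedPrimes R (M ⧸ N) := by
  rintro p hp'
  obtain ⟨hp, x, hx⟩ := isAssociatedPrime_iff.mp hp'
  have hxp : ∀ s : R, s ∈ p ↔ s • x = 0 := fun s => by
    rw [hx, Submodule.mem_colon_singleton, Submodule.mem_bot]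
  by_cases h : ∀ r : R, r • x ∈ N → r • x = 0
  · right
    refine isAssociatedPrime_iff.mpr ⟨hp, N.mkQ x, ?_⟩
    ext s
    rw [Submodule.mem_colon_singleton, Submodule.mem_bot, ← map_smul, Submodule.mkQ_apply,
      Submodule.Quotient.mk_eq_zero, hxp]
    exact ⟨fun hs => hs ▸ N.zero_mem, h s⟩
  · push_neg at h
    obtain ⟨r, hrN, hr0⟩ := h
    have hrp : r ∉ p := fun hr => hr0 ((hxp r).mp hr)
    left
    refine isAssociatedPrime_iff.mpr ⟨hp, ⟨r • x, hrN⟩, ?_⟩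
    ext s
    rw [Submodule.mem_colon_singleton, Submodule.mem_bot]
    constructor
    · intro hs
      apply Subtype.ext
      have : s • (r • x) = r • (s • x) := smul_comm s r x
      show s • (r • x) = 0
      rw [this, (hxp s).mp hs, smul_zero]
    · intro hs
      have h2 : (s * r) • x = 0 := by
        have := congrArg (Subtype.val) hs
        simpa [mul_smul] using this
      rcases hp.mul_mem_iff_mem_or_mem.mp ((hxp _).mpr h2) with h | h
      · exact h
      · exact absurd h hrp

lemma aux_ass_finite [IsNoetherianRing R] (M : Type*) [AddCommGroup M] [Module R M]
    [Module.Finite R M] : (associatedPrimes R M).Finite := by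
  have key : ∀ N : Submodule R M, (associatedPrimes R (M ⧸ N)).Finite := by
    intro N
    induction N using WellFoundedGT.induction with
    | _ N IH =>
      by_cases htriv : Subsingleton (M ⧸ N)
      · rw [associatedPrimes.eq_empty_of_subsingleton]; exact Set.finite_empty
      · have : Nontrivial (M ⧸ N) := not_subsingleton_iff_nontrivial.mp htriv
        obtain ⟨p, hp⟩ := associatedPrimes.nonempty R (M ⧸ N)
        obtain ⟨hprime, xb, hxb⟩ := isAssociatedPrime_iff.mp hp
        obtain ⟨x, rfl⟩ := N.mkQ_surjective xb
        have hxN : x ∉ N := by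
          intro hxN
          apply hprime.ne_top
          rw [hxb, Ideal.eq_top_iff_one, Submodule.mem_colon_singleton, one_smul, Submodule.mem_bot,
            Submodule.mkQ_apply, Submodule.Quotient.mk_eq_zero]
          exact hxN
        set N' : Submodule R M := N ⊔ R ∙ x with hN'
        have hlt : N < N' := by
          rw [hN', lt_iff_le_and_ne]
          refine ⟨le_sup_left, fun he => hxN ?_⟩
          rw [he]
          exact Submodule.mem_sup_right (Submodule.mem_span_singleton_self x)
        have hfin' : (associatedPrimes R (M ⧸ N')).Finite := IH N' hlt
        -- the submodule K = span of xb inside M ⧸ N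
        set K : Submodule R (M ⧸ N) := R ∙ (N.mkQ x) with hK
        have hsub := aux_ass_ses (R := R) K
        -- Ass K = {p}
        have hKfin : (associatedPrimes R K).Finite := by
          have e1 : (R ⧸ p) ≃ₗ[R] K := by
            have hker : LinearMap.ker (LinearMap.toSpanSingleton R (M ⧸ N) (N.mkQ x)) = p := by
              ext s
              rw [LinearMap.mem_ker, LinearMap.toSpanSingleton_apply, hxb,
                Submodule.mem_colon_singleton, Submodule.mem_bot]
            have e2 := (LinearMap.quotKerEquivRange (LinearMap.toSpanSingleton R (M ⧸ N) (N.mkQ x)))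
            rw [hker] at e2
            rw [hK, LinearMap.span_singleton_eq_range]
            exact e2
          rw [← LinearEquiv.AssociatedPrimes.eq e1,
            associatedPrimes.eq_singleton_of_isPrimary hprime.isPrimary]
          exact Set.finite_singleton _
        have hQfin : (associatedPrimes R ((M ⧸ N) ⧸ K)).Finite := by
          have e : ((M ⧸ N) ⧸ K) ≃ₗ[R] (M ⧸ N') := by
            have hmap : K = Submodule.map N.mkQ N' := by
              rw [hN', Submodule.map_sup, Submodule.map_span, Submodule.mkQ_map_self,
                Set.image_singleton, bot_sup_eq, hK]
            exact (Submodule.quotEquivOfEq K _ hmap) ≪≫ₗ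
              Submodule.quotientQuotientEquivQuotient N N' hlt.le
          rw [LinearEquiv.AssociatedPrimes.eq e]
          exact hfin'
        exact ((hKfin.union hQfin).subset hsub)
  have e : M ≃ₗ[R] (M ⧸ (⊥ : Submodule R M)) := (Submodule.quotEquivOfEqBot ⊥ rfl).symm
  rw [LinearEquiv.AssociatedPrimes.eq e]
  exact key ⊥

end Basic

section Local
variable {R : Type u} [CommRing R] [IsLocalRing R]

lemma aux_extend {M : Type u} [AddCommGroup M] [Module R M] [Module.Finite R M]
    [Nontrivial M] {rs : List R} {r : R}
    (hrs : IsWeaklyRegular M rs) (h1 : ∀ x ∈ rs, x ∈ maximalIdeal R) (hr : r ∈ maximalIdeal R)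
    (hreg : IsSMulRegular (M ⧸ (Ideal.ofList rs • ⊤ : Submodule R M)) r) :
    IsRegular M (rs ++ [r]) := by
  have hmem : ∀ x ∈ rs ++ [r], x ∈ maximalIdeal R := by
    intro x hx
    rcases List.mem_append.mp hx with h | h
    · exact h1 x h
    · rw [List.mem_singleton.mp h]; exact hr
  rw [IsLocalRing.isRegular_iff_isWeaklyRegular_of_subset_maximalIdeal hmem,
    isWeaklyRegular_append_iff]
  exact ⟨hrs, (isWeaklyRegular_singleton_iff _ r).mpr hreg⟩

lemma aux_rotate {M : Type u} [AddCommGroup M] [Module R M] [IsNoetherianRing R]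
    [Module.Finite R M] {rs : List R} {r : R}
    (h : IsRegular M (rs ++ [r])) :
    IsSMulRegular M r ∧ IsRegular (QuotSMulTop r M) rs := by
  have hperm : (rs ++ [r]).Perm (r :: rs) := List.perm_append_singleton r rs
  have h2 : IsRegular M (r :: rs) := IsLocalRing.isRegular_of_perm h hperm
  rw [isRegular_cons_iff] at h2
  exact h2


lemma aux_mem_smul_top {M : Type*} [AddCommGroup M] [Module R M] (r : R) (y : M) :
    y ∈ r • (⊤ : Submodule R M) ↔ ∃ m, r • m = y := by
  constructor
  · rintro ⟨m, -, rfl⟩; exact ⟨m, rfl⟩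
  · rintro ⟨m, rfl⟩; exact Submodule.smul_mem_pointwise_smul m r ⊤ trivial

variable [IsLocalRing R]

lemma aux_rees {P : Type*} [AddCommGroup P] [Module R P] {x r : R}
    (hx : IsSMulRegular P x) (hr : IsSMulRegular P r) (hr𝔪 : r ∈ maximalIdeal R)
    (w : QuotSMulTop x P) (hw : w ≠ 0) (hann : ∀ s ∈ maximalIdeal R, s • w = 0) :
    ∃ v : QuotSMulTop r P, v ≠ 0 ∧ ∀ s ∈ maximalIdeal R, s • v = 0 := by
  obtain ⟨u, rfl⟩ := Submodule.mkQ_surjective _ w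
  rw [Ne, Submodule.mkQ_apply, Submodule.Quotient.mk_eq_zero] at hw
  have hann' : ∀ s ∈ maximalIdeal R, s • u ∈ x • (⊤ : Submodule R P) := by
    intro s hs
    have := hann s hs
    rwa [Submodule.mkQ_apply, ← Submodule.Quotient.mk_smul, Submodule.Quotient.mk_eq_zero] at this
  obtain ⟨v, hv⟩ := (aux_mem_smul_top x (r • u)).mp (hann' r hr𝔪)
  refine ⟨Submodule.Quotient.mk v, ?_, ?_⟩
  · rw [Ne, Submodule.Quotient.mk_eq_zero, aux_mem_smul_top]
    rintro ⟨m, rfl⟩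
    apply hw
    have : x • (r • m) = r • (x • m) := smul_comm x r m
    rw [this] at hv
    have := hr hv
    rw [← this]
    exact Submodule.smul_mem_pointwise_smul m x ⊤ trivial
  · intro s hs
    rw [← Submodule.Quotient.mk_smul, Submodule.Quotient.mk_eq_zero, aux_mem_smul_top]
    obtain ⟨m, hm⟩ := (aux_mem_smul_top x (s • u)).mp (hann' s hs)
    refine ⟨m, hx (show x • (r • m) = x • (s • v) from ?_)⟩
    calc x • r • m = r • (x • m) := smul_comm x r m
    _ = r • (s • u) := by rw [hm]
    _ = s • (r • u) := smul_comm r s u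
    _ = s • (x • v) := by rw [hv]
    _ = x • (s • v) := smul_comm s x v

lemma aux_exists_maximal [IsNoetherianRing R] (M : Type u) [AddCommGroup M] [Module R M]
    [Module.Finite R M] [Nontrivial M] :
    ∃ ms : List R, (∀ x ∈ ms, x ∈ maximalIdeal R) ∧ IsRegular M ms ∧
      ∀ s ∈ maximalIdeal R, ¬ IsRegular M (ms ++ [s]) := by
  by_contra hcon
  push_neg at hcon
  have h : ∀ l : List R, (∀ x ∈ l, x ∈ maximalIdeal R) → IsRegular M l →
      ∃ s, s ∈ maximalIdeal R ∧ IsRegular M (l ++ [s]) := by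
    intro l h1 h2
    obtain ⟨s, hs1, hs2⟩ := hcon l h1 h2
    exact ⟨s, hs1, hs2⟩
  let T := {l : List R // (∀ x ∈ l, x ∈ maximalIdeal R) ∧ IsRegular M l}
  let g : T → T := fun l =>
    ⟨l.1 ++ [(h l.1 l.2.1 l.2.2).choose], by
      have hs := (h l.1 l.2.1 l.2.2).choose_spec
      constructor
      · intro x hx
        rcases List.mem_append.mp hx with h' | h'
        · exact l.2.1 x h'
        · rw [List.mem_singleton.mp h']; exact hs.1
      · exact hs.2⟩
  let c : ℕ → T := fun n => g^[n] ⟨[], by simp, IsRegular.nil R M⟩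
  have hc : ∀ n, c (n + 1) = g (c n) := fun n => Function.iterate_succ_apply' g n _
  let N : ℕ →o Submodule R M :=
    ⟨fun n => Ideal.ofList (c n).1 • ⊤, monotone_nat_of_le_succ (by
      intro n
      rw [hc]
      show Ideal.ofList (c n).1 • ⊤ ≤ Ideal.ofList ((c n).1 ++ [_]) • ⊤
      rw [Ideal.ofList_append]
      exact Submodule.smul_mono_left le_sup_left)⟩
  obtain ⟨n, hn⟩ := monotone_stabilizes_iff_noetherian.mpr inferInstance N
  have heq : N n = N (n + 1) := hn (n + 1) (by omega)
  obtain ⟨hmem_n, hreg_n⟩ := (c n).2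
  set s := (h (c n).1 hmem_n hreg_n).choose with hs
  have hreg : IsRegular M ((c n).1 ++ [s]) := (h (c n).1 hmem_n hreg_n).choose_spec.2
  have hc1 : (c (n + 1)).1 = (c n).1 ++ [s] := by
    rw [hc n]
  have hNn : Ideal.ofList ((c n).1 ++ [s]) • (⊤ : Submodule R M) = Ideal.ofList (c n).1 • ⊤ := by
    rw [← hc1]
    exact heq.symm
  have hsle : Ideal.span {s} • (⊤ : Submodule R M) ≤ Ideal.ofList (c n).1 • ⊤ := by
    rw [← hNn, Ideal.ofList_append, Ideal.ofList_singleton, Submodule.sup_smul]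
    exact le_sup_right
  have hwreg := hreg.toIsWeaklyRegular
  rw [isWeaklyRegular_append_iff] at hwreg
  have hsreg : IsSMulRegular (M ⧸ (Ideal.ofList (c n).1 • ⊤ : Submodule R M)) s :=
    (isWeaklyRegular_singleton_iff _ s).mp hwreg.2
  have hne : (Ideal.ofList (c n).1 • ⊤ : Submodule R M) ≠ ⊤ := by
    intro htop
    apply hreg.top_ne_smul
    rw [Ideal.ofList_append, Ideal.ofList_singleton, Submodule.sup_smul,
      sup_eq_left.mpr hsle, htop]
  have : Nontrivial (M ⧸ (Ideal.ofList (c n).1 • ⊤ : Submodule R M)) :=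
    Submodule.Quotient.nontrivial_iff.mpr hne
  obtain ⟨a, b, hab⟩ := exists_pair_ne (M ⧸ (Ideal.ofList (c n).1 • ⊤ : Submodule R M))
  apply hab
  apply hsreg
  have hz : ∀ z : M ⧸ (Ideal.ofList (c n).1 • ⊤ : Submodule R M), s • z = 0 := by
    intro z
    obtain ⟨m, rfl⟩ := Submodule.mkQ_surjective _ z
    rw [Submodule.mkQ_apply, ← Submodule.Quotient.mk_smul, Submodule.Quotient.mk_eq_zero]
    exact hsle (Submodule.smul_mem_smul (Ideal.mem_span_singleton_self s) trivial)
  exact (hz a).trans (hz b).symm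

end Local

section NoethLocal
variable {R : Type u} [CommRing R] [IsLocalRing R] [IsNoetherianRing R]

lemma aux_ass_finite' (M : Type*) [AddCommGroup M] [Module R M]
    [Module.Finite R M] : (associatedPrimes R M).Finite := aux_ass_finite M

lemma aux_star (M : Type*) [AddCommGroup M] [Module R M] [Module.Finite R M] [Nontrivial M]
    (h : ∀ r ∈ maximalIdeal R, ¬ IsSMulRegular M r) :
    ∃ x : M, x ≠ 0 ∧ ∀ r ∈ maximalIdeal R, r • x = 0 := by
  have hfin := aux_ass_finite' (R := R) M
  have hsub : (maximalIdeal R : Set R) ⊆ ⋃ p ∈ associatedPrimes R M, ↑p := by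
    rw [biUnion_associatedPrimes_eq_zero_divisors]
    intro r hr
    have := h r hr
    rw [IsSMulRegular, Function.Injective] at this
    push_neg at this
    obtain ⟨a, b, hab, hne⟩ := this
    exact ⟨a - b, sub_ne_zero.mpr hne, by rw [smul_sub, hab, sub_self]⟩
  -- prime avoidance
  obtain ⟨p, hp, hle⟩ : ∃ p ∈ associatedPrimes R M, maximalIdeal R ≤ p := by
    classical
    set s : Finset (Ideal R) := hfin.toFinset with hs
    have hsub2 : (maximalIdeal R : Set R) ⊆ ⋃ p ∈ s, (p : Set R) := by
      intro r hr
      obtain ⟨p, hp1, hp2⟩ := Set.mem_iUnion₂.mp (hsub hr)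
      exact Set.mem_iUnion₂.mpr ⟨p, by simpa [hs] using hp1, hp2⟩
    rcases s.eq_empty_or_nonempty with he | ⟨q, hq⟩
    · rw [he] at hsub2
      simp only [Finset.notMem_empty, Set.iUnion_of_empty, Set.iUnion_empty] at hsub2
      exact absurd (hsub2 (maximalIdeal R).zero_mem) (Set.notMem_empty 0)
    · have hprime : ∀ q' ∈ s, q' ≠ q → q' ≠ q → (q' : Ideal R).IsPrime := by
        intro q' hq' _ _
        have : q' ∈ associatedPrimes R M := by simpa [hs] using hq'
        exact this.isPrime
      obtain ⟨p, hps, hple⟩ := (Ideal.subset_union_prime q q hprime).mp hsub2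
      exact ⟨p, by simpa [hs] using hps, hple⟩
  have hpm : p = maximalIdeal R :=
    (Ideal.IsMaximal.eq_of_le (IsLocalRing.maximalIdeal.isMaximal R)
      hp.isPrime.ne_top hle).symm
  obtain ⟨hprime, x, hx⟩ := isAssociatedPrime_iff.mp hp
  refine ⟨x, ?_, fun r hr => ?_⟩
  · rintro rfl
    apply hprime.ne_top
    rw [hx, Ideal.eq_top_iff_one, Submodule.mem_colon_singleton, one_smul, Submodule.mem_bot]
  · have : r ∈ p := hpm ▸ hr
    rwa [hx, Submodule.mem_colon_singleton, Submodule.mem_bot] at this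

lemma aux_common (M N : Type*) [AddCommGroup M] [Module R M] [Module.Finite R M] [Nontrivial M]
    [AddCommGroup N] [Module R N] [Module.Finite R N] [Nontrivial N]
    (hM : ∃ s ∈ maximalIdeal R, IsSMulRegular M s)
    (hN : ∃ s ∈ maximalIdeal R, IsSMulRegular N s) :
    ∃ r ∈ maximalIdeal R, IsSMulRegular M r ∧ IsSMulRegular N r := by
  by_contra hcon
  push_neg at hcon
  have h : ∀ r ∈ maximalIdeal R, ¬ IsSMulRegular (M × N) r := by
    intro r hr hreg
    have hMreg : IsSMulRegular M r := fun a b hab =>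
      congrArg Prod.fst (hreg (a₁ := (a, 0)) (a₂ := (b, 0)) (by simp [Prod.smul_def, hab]))
    have hNreg : IsSMulRegular N r := fun a b hab =>
      congrArg Prod.snd (hreg (a₁ := (0, a)) (a₂ := (0, b)) (by simp [Prod.smul_def, hab]))
    exact hcon r hr hMreg hNreg
  obtain ⟨⟨x, y⟩, hxy, hann⟩ := aux_star (M × N) h
  obtain ⟨sM, hsM, hsMreg⟩ := hM
  obtain ⟨sN, hsN, hsNreg⟩ := hN
  have hx0 : x = 0 := by
    by_contra hx
    apply hx
    have := congrArg Prod.fst (hann sM hsM)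
    simpa using hsMreg (a₁ := x) (a₂ := 0) (by simpa using this)
  have hy0 : y = 0 := by
    by_contra hy
    apply hy
    have := congrArg Prod.snd (hann sN hsN)
    simpa using hsNreg (a₁ := y) (a₂ := 0) (by simpa using this)
  exact hxy (by simp [hx0, hy0])

lemma aux_half_rees (k : ℕ) :
    ∀ (M : Type u) [AddCommGroup M] [Module R M] [Module.Finite R M]
    (ms : List R), ms.length = k → (∀ x ∈ ms, x ∈ maximalIdeal R) → IsRegular M ms →
    (∀ s ∈ maximalIdeal R, ¬ IsRegular M (ms ++ [s])) →
    ∀ rs : List R, (∀ x ∈ rs, x ∈ maximalIdeal R) → IsRegular M rs → rs.length ≤ k := by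
  induction k with
  | zero =>
    intro M _ _ _ ms hlen hmem hreg hmax rs hrsmem hrsreg
    cases rs with
    | nil => simp
    | cons r0 rs0 =>
      exfalso
      have h1 : IsRegular M [r0] := by
        have := aux_take hrsreg 1
        simpa using this
      have hms : ms = [] := List.length_eq_zero_iff.mp hlen
      exact hmax r0 (hrsmem r0 List.mem_cons_self) (by rw [hms]; simpa using h1)
  | succ k IH =>
    intro M _ _ _ ms hlen hmem hreg hmax rs hrsmem hrsreg
    cases rs with
    | nil => simp
    | cons r0 rs0 =>
    have hL : (r0 :: rs0).length = rs0.length + 1 := rfl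
    set L := rs0.length + 1 with hLdef
    set rsl : List R := r0 :: rs0 with hrsl
    have hrslen : rsl.length = L := rfl
    have hNontriv : Nontrivial M := hrsreg.nontrivial
    -- prefixes
    set ms' := ms.take k with hms'
    set rs' := rsl.take (L - 1) with hrs'
    have hmslen' : ms'.length = k := by
      rw [hms', List.length_take, hlen]; omega
    have hrslen' : rs'.length = L - 1 := by
      rw [hrs', List.length_take, hrslen]; omega
    have hkms : k < ms.length := by omega
    have hLrs : L - 1 < rsl.length := by omega
    -- last elements are regular on the prefix quotients
    have hxreg : IsSMulRegular (M ⧸ (Ideal.ofList ms' • ⊤ : Submodule R M)) ms[k] :=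
      hreg.toIsWeaklyRegular.regular_mod_prev k hkms
    have hyreg : IsSMulRegular (M ⧸ (Ideal.ofList rs' • ⊤ : Submodule R M)) rsl[L-1] :=
      hrsreg.toIsWeaklyRegular.regular_mod_prev (L-1) hLrs
    -- nontriviality of the prefix quotients
    have hnt1 : Nontrivial (M ⧸ (Ideal.ofList ms' • ⊤ : Submodule R M)) :=
      Submodule.Quotient.nontrivial_iff.mpr ((aux_take hreg k).top_ne_smul.symm)
    have hnt2 : Nontrivial (M ⧸ (Ideal.ofList rs' • ⊤ : Submodule R M)) :=
      Submodule.Quotient.nontrivial_iff.mpr ((aux_take hrsreg (L-1)).top_ne_smul.symm)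
    -- common regular element
    obtain ⟨r, hr𝔪, hrP, hrQ⟩ := aux_common
      (M ⧸ (Ideal.ofList ms' • ⊤ : Submodule R M))
      (M ⧸ (Ideal.ofList rs' • ⊤ : Submodule R M))
      ⟨ms[k], hmem _ (List.getElem_mem hkms), hxreg⟩
      ⟨rsl[L-1], hrsmem _ (by rw [hrsl] at *; exact List.getElem_mem hLrs), hyreg⟩
    have hmem' : ∀ x ∈ ms', x ∈ maximalIdeal R := fun x hx => hmem x (List.take_subset k ms hx)
    have hrsmem' : ∀ x ∈ rs', x ∈ maximalIdeal R := fun x hx => hrsmem x (List.take_subset _ _ hx)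
    have h1 : IsRegular M (ms' ++ [r]) :=
      aux_extend (aux_take hreg k).toIsWeaklyRegular hmem' hr𝔪 hrP
    have h2 : IsRegular M (rs' ++ [r]) :=
      aux_extend (aux_take hrsreg (L-1)).toIsWeaklyRegular hrsmem' hr𝔪 hrQ
    obtain ⟨hrM, h1'⟩ := aux_rotate h1
    obtain ⟨-, h2'⟩ := aux_rotate h2
    -- maximality of ms' on M' = QuotSMulTop r M
    have hmax' : ∀ s ∈ maximalIdeal R, ¬ IsRegular (QuotSMulTop r M) (ms' ++ [s]) := by
      intro s hs hcon
      have hcon2 : IsRegular M (r :: (ms' ++ [s])) := IsRegular.cons hrM hcon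
      -- all elements of the maximal ideal are zero divisors on M ⧸ ofList ms • ⊤
      have hntms : Nontrivial (M ⧸ (Ideal.ofList ms • ⊤ : Submodule R M)) :=
        Submodule.Quotient.nontrivial_iff.mpr (hreg.top_ne_smul.symm)
      have hallzero : ∀ s' ∈ maximalIdeal R,
          ¬ IsSMulRegular (M ⧸ (Ideal.ofList ms • ⊤ : Submodule R M)) s' := by
        intro s' hs' hregs'
        exact hmax s' hs' (aux_extend hreg.toIsWeaklyRegular hmem hs' hregs')
      obtain ⟨w₀, hw₀ne, hw₀ann⟩ := aux_star (M ⧸ (Ideal.ofList ms • ⊤ : Submodule R M)) hallzero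
      -- rewrite ms as ms' ++ [x]
      have hsplit : ms' ++ [ms[k]] = ms := by
        rw [hms']
        have h1 : (ms.take k).concat ms[k] = ms.take (k+1) := List.take_concat_get hkms
        rw [List.concat_eq_append] at h1
        rw [h1, List.take_of_length_le (by omega)]
      have hideq : Ideal.ofList ms = Ideal.ofList (ms[k] :: ms') := by
        conv_lhs => rw [← hsplit]
        simp only [Ideal.ofList_append, Ideal.ofList_cons, Ideal.ofList_nil, sup_bot_eq]
        exact sup_comm _ _
      -- transport the witness to QuotSMulTop x P where P = M ⧸ ofList ms' • ⊤
      let e : (M ⧸ (Ideal.ofList ms • ⊤ : Submodule R M)) ≃ₗ[R]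
          QuotSMulTop ms[k] (M ⧸ (Ideal.ofList ms' • ⊤ : Submodule R M)) :=
        (Submodule.quotEquivOfEq _ _ (congrArg (· • ⊤) hideq)) ≪≫ₗ
          Submodule.quotOfListConsSMulTopEquivQuotSMulTopOuter M ms[k] ms'
      obtain ⟨v, hvne, hvann⟩ := aux_rees hxreg hrP hr𝔪 (e w₀)
        (e.map_ne_zero_iff.mpr hw₀ne) (fun s' hs' => by rw [← map_smul, hw₀ann s' hs', map_zero])
      -- s is regular on QuotSMulTop r P, contradiction with the annihilated witness v
      have hcon3 : IsRegular M ((r :: ms') ++ [s]) := hcon2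
      have hwk := hcon3.toIsWeaklyRegular
      rw [isWeaklyRegular_append_iff] at hwk
      have hsreg : IsSMulRegular (M ⧸ (Ideal.ofList (r :: ms') • ⊤ : Submodule R M)) s :=
        (isWeaklyRegular_singleton_iff _ s).mp hwk.2
      have hsreg2 : IsSMulRegular
          (QuotSMulTop r (M ⧸ (Ideal.ofList ms' • ⊤ : Submodule R M))) s :=
        ((Submodule.quotOfListConsSMulTopEquivQuotSMulTopOuter M r ms').isSMulRegular_congr s).mp hsreg
      exact hvne (hsreg2 (a₁ := v) (a₂ := 0) (by show s • v = s • 0; rw [hvann s hs, smul_zero]))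
    -- apply the induction hypothesis on QuotSMulTop r M
    have hfin : rs'.length ≤ k := by
      refine IH (QuotSMulTop r M) ms' hmslen' hmem' h1' hmax' rs' hrsmem' h2'
    omega

lemma aux_bdd (M : Type u) [AddCommGroup M] [Module R M] [Module.Finite R M] :
    BddAbove {n : ℕ | ∃ rs : List R, rs.length = n ∧ (∀ r ∈ rs, r ∈ maximalIdeal R) ∧
      IsRegular M rs} := by
  rcases Set.eq_empty_or_nonempty {n : ℕ | ∃ rs : List R, rs.length = n ∧
      (∀ r ∈ rs, r ∈ maximalIdeal R) ∧ IsRegular M rs} with he | hne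
  · rw [he]; exact bddAbove_empty
  · obtain ⟨n₀, rs₀, hlen₀, hmem₀, hreg₀⟩ := hne
    have : Nontrivial M := hreg₀.nontrivial
    obtain ⟨ms, hmem, hreg, hmax⟩ := aux_exists_maximal (R := R) M
    refine ⟨ms.length, ?_⟩
    rintro n ⟨rs, rfl, hmem', hreg'⟩
    exact aux_half_rees ms.length M ms rfl hmem hreg hmax rs hmem' hreg'

section Pi

variable (M : Type u) [AddCommGroup M] [Module R M]

lemma aux_smul_top_pi (n : ℕ) (I : Ideal R) :
    (I • ⊤ : Submodule R (Fin n → M)) = Submodule.pi Set.univ (fun _ => (I • ⊤ : Submodule R M)) := by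
  apply le_antisymm
  · refine Submodule.smul_le.mpr ?_
    intro r hr m _ i _
    exact Submodule.smul_mem_smul hr trivial
  · intro x hx
    classical
    have hsum : ∑ i, Pi.single i (x i) = x := Finset.univ_sum_single x
    rw [← hsum]
    refine Submodule.sum_mem _ fun i _ => ?_
    have h1 : (Pi.single i (x i) : Fin n → M) =
        LinearMap.single R (fun _ : Fin n => M) i (x i) := rfl
    have h2 : LinearMap.single R (fun _ : Fin n => M) i (x i) ∈
        Submodule.map (LinearMap.single R (fun _ : Fin n => M) i) (I • ⊤) :=
      Submodule.mem_map_of_mem (hx i trivial)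
    rw [Submodule.map_smul''] at h2
    rw [h1]
    exact Submodule.smul_mono le_rfl le_top h2

lemma aux_pi_reg {n : ℕ} (hn : n ≠ 0) {rs : List R} (h : IsRegular M rs) :
    IsRegular (Fin n → M) rs := by
  classical
  refine ⟨?_, ?_⟩
  · rw [isWeaklyRegular_iff]
    intro i hi
    have e : ((Fin n → M) ⧸ (Ideal.ofList (rs.take i) • ⊤ : Submodule R (Fin n → M))) ≃ₗ[R]
        (Fin n → (M ⧸ (Ideal.ofList (rs.take i) • ⊤ : Submodule R M))) :=
      (Submodule.quotEquivOfEq _ _ (aux_smul_top_pi M n _)) ≪≫ₗ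
        (Submodule.quotientPi _)
    refine (e.isSMulRegular_congr rs[i]).mpr ?_
    intro a b hab
    funext j
    exact (h.toIsWeaklyRegular.regular_mod_prev i hi) (congrFun hab j)
  · intro htop
    apply h.top_ne_smul
    have i0 : Fin n := ⟨0, Nat.pos_of_ne_zero hn⟩
    have hproj : Function.Surjective (LinearMap.proj (R := R) (φ := fun _ : Fin n => M) i0) :=
      fun m => ⟨fun _ => m, rfl⟩
    have := congrArg (Submodule.map (LinearMap.proj (R := R) (φ := fun _ : Fin n => M) i0)) htop
    rwa [Submodule.map_top, LinearMap.range_eq_top.mpr hproj, Submodule.map_smul'',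
      Submodule.map_top, LinearMap.range_eq_top.mpr hproj] at this

end Pi

section SES

variable {A B C : Type u} [AddCommGroup A] [Module R A] [AddCommGroup B] [Module R B]
  [AddCommGroup C] [Module R C]

lemma aux_reg_mid (f : A →ₗ[R] B) (g : B →ₗ[R] C) (hf : Function.Injective f)
    (hfg : LinearMap.range f = LinearMap.ker g) {r : R}
    (hA : IsSMulRegular A r) (hC : IsSMulRegular C r) : IsSMulRegular B r := by
  intro b1 b2 hb
  rw [← sub_eq_zero]
  have hrb : r • (b1 - b2) = 0 := by
    rw [smul_sub, sub_eq_zero]; exact hb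
  have hgb : g (b1 - b2) = 0 := by
    apply hC
    show r • g (b1 - b2) = r • 0
    rw [← map_smul, hrb, map_zero, smul_zero]
  obtain ⟨a, ha⟩ : b1 - b2 ∈ LinearMap.range f := by rw [hfg]; exact hgb
  have ha0 : a = 0 := by
    apply hA
    show r • a = r • 0
    apply hf
    rw [map_smul, ha, hrb, smul_zero, map_zero]
  rw [← ha, ha0, map_zero]

lemma aux_map_inj (f : A →ₗ[R] B) (g : B →ₗ[R] C) (hf : Function.Injective f)
    (hfg : LinearMap.range f = LinearMap.ker g) {r : R} (hC : IsSMulRegular C r) :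
    Function.Injective (QuotSMulTop.map r f) := by
  have key : ∀ x : A, QuotSMulTop.map r f (Submodule.Quotient.mk x) = 0 →
      (Submodule.Quotient.mk x : QuotSMulTop r A) = 0 := by
    intro x hx
    rw [QuotSMulTop.map_apply_mk, Submodule.Quotient.mk_eq_zero] at hx
    obtain ⟨y, hy⟩ : ∃ y, r • y = f x := by
      rcases hx with ⟨y, -, hy⟩; exact ⟨y, hy⟩
    have hgy : g y = 0 := by
      apply hC
      show r • g y = r • 0
      rw [← map_smul, hy, smul_zero]
      have : f x ∈ LinearMap.ker g := by rw [← hfg]; exact ⟨x, rfl⟩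
      exact this
    obtain ⟨a, ha⟩ : y ∈ LinearMap.range f := by rw [hfg]; exact hgy
    have hxa : x = r • a := by
      apply hf
      rw [map_smul, ha, hy]
    rw [Submodule.Quotient.mk_eq_zero, hxa]
    exact Submodule.smul_mem_pointwise_smul a r ⊤ trivial
  intro w1 w2 hw
  rw [← sub_eq_zero]
  obtain ⟨x, hx⟩ := Submodule.mkQ_surjective _ (w1 - w2)
  rw [← hx]
  apply key
  rw [Submodule.mkQ_apply] at hx
  rw [hx, map_sub, hw, sub_self]

lemma aux_middle (t : ℕ) :
    ∀ (A B C : Type u) [AddCommGroup A] [Module R A] [Module.Finite R A]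
      [AddCommGroup B] [Module R B] [Module.Finite R B]
      [AddCommGroup C] [Module R C] [Module.Finite R C]
      (f : A →ₗ[R] B) (g : B →ₗ[R] C), Function.Injective f → Function.Surjective g →
      LinearMap.range f = LinearMap.ker g →
      (∃ xs : List R, xs.length = t ∧ (∀ x ∈ xs, x ∈ maximalIdeal R) ∧ IsRegular A xs) →
      (∃ ys : List R, ys.length = t ∧ (∀ y ∈ ys, y ∈ maximalIdeal R) ∧ IsRegular C ys) →
      ∃ zs : List R, zs.length = t ∧ (∀ z ∈ zs, z ∈ maximalIdeal R) ∧ IsRegular B zs := by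
  induction t with
  | zero =>
    intro A B C _ _ _ _ _ _ _ _ _ f g hf hg hfg hA hC
    obtain ⟨xs, hlen, -, hreg⟩ := hA
    have : Nontrivial A := hreg.nontrivial
    have : Nontrivial B := by
      obtain ⟨a, ha⟩ := exists_ne (0 : A)
      exact ⟨f a, 0, fun h => ha (hf (by rw [h, map_zero]))⟩
    exact ⟨[], rfl, by simp, IsRegular.nil R B⟩
  | succ t IH =>
    intro A B C _ _ _ _ _ _ _ _ _ f g hf hg hfg hA hC
    obtain ⟨xs, hxlen, hxmem, hxreg⟩ := hA
    obtain ⟨ys, hylen, hymem, hyreg⟩ := hC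
    have hntA : Nontrivial A := hxreg.nontrivial
    have hntC : Nontrivial C := hyreg.nontrivial
    have hxt : t < xs.length := by omega
    have hyt : t < ys.length := by omega
    have hxreg' : IsSMulRegular (A ⧸ (Ideal.ofList (xs.take t) • ⊤ : Submodule R A)) xs[t] :=
      hxreg.toIsWeaklyRegular.regular_mod_prev t hxt
    have hyreg' : IsSMulRegular (C ⧸ (Ideal.ofList (ys.take t) • ⊤ : Submodule R C)) ys[t] :=
      hyreg.toIsWeaklyRegular.regular_mod_prev t hyt
    have hnt1 : Nontrivial (A ⧸ (Ideal.ofList (xs.take t) • ⊤ : Submodule R A)) :=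
      Submodule.Quotient.nontrivial_iff.mpr ((aux_take hxreg t).top_ne_smul.symm)
    have hnt2 : Nontrivial (C ⧸ (Ideal.ofList (ys.take t) • ⊤ : Submodule R C)) :=
      Submodule.Quotient.nontrivial_iff.mpr ((aux_take hyreg t).top_ne_smul.symm)
    obtain ⟨r, hr𝔪, hrA', hrC'⟩ := aux_common
      (A ⧸ (Ideal.ofList (xs.take t) • ⊤ : Submodule R A))
      (C ⧸ (Ideal.ofList (ys.take t) • ⊤ : Submodule R C))
      ⟨xs[t], hxmem _ (List.getElem_mem hxt), hxreg'⟩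
      ⟨ys[t], hymem _ (List.getElem_mem hyt), hyreg'⟩
    have hxmem' : ∀ x ∈ xs.take t, x ∈ maximalIdeal R :=
      fun x hx => hxmem x (List.take_subset _ _ hx)
    have hymem' : ∀ y ∈ ys.take t, y ∈ maximalIdeal R :=
      fun y hy => hymem y (List.take_subset _ _ hy)
    obtain ⟨hrA, hA'⟩ := aux_rotate
      (aux_extend (aux_take hxreg t).toIsWeaklyRegular hxmem' hr𝔪 hrA')
    obtain ⟨hrC, hC'⟩ := aux_rotate
      (aux_extend (aux_take hyreg t).toIsWeaklyRegular hymem' hr𝔪 hrC')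
    have hrB : IsSMulRegular B r := aux_reg_mid f g hf hfg hrA hrC
    obtain ⟨zs, hzlen, hzmem, hzreg⟩ := IH (QuotSMulTop r A) (QuotSMulTop r B) (QuotSMulTop r C)
      (QuotSMulTop.map r f) (QuotSMulTop.map r g)
      (aux_map_inj f g hf hfg hrC)
      (QuotSMulTop.map_surjective r hg)
      (by
        have hex : Function.Exact f g := LinearMap.exact_iff.mpr hfg.symm
        have := QuotSMulTop.map_exact r hex hg
        exact (LinearMap.exact_iff.mp this).symm)
      ⟨xs.take t, by rw [List.length_take]; omega, hxmem', hA'⟩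
      ⟨ys.take t, by rw [List.length_take]; omega, hymem', hC'⟩
    refine ⟨r :: zs, by simp [hzlen], ?_, IsRegular.cons hrB hzreg⟩
    intro z hz
    rcases List.mem_cons.mp hz with h | h
    · rw [h]; exact hr𝔪
    · exact hzmem z h

end SES

lemma aux_extract (M : Type u) [AddCommGroup M] [Module R M] [Module.Finite R M] {t : ℕ}
    (ht : t ≤ rdepth R M) (h0 : t ≠ 0) :
    ∃ xs : List R, xs.length = t ∧ (∀ x ∈ xs, x ∈ maximalIdeal R) ∧ IsRegular M xs := by
  rw [rdepth] at ht
  set S := {n : ℕ | ∃ rs : List R, rs.length = n ∧ (∀ r ∈ rs, r ∈ maximalIdeal R) ∧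
    IsRegular M rs} with hS
  have hbdd : BddAbove S := aux_bdd M
  have hne : S.Nonempty := by
    by_contra h
    rw [Set.not_nonempty_iff_eq_empty] at h
    rw [h, csSup_empty] at ht
    exact h0 (Nat.le_zero.mp ht)
  obtain ⟨xs, hlen, hm, hr⟩ := Nat.sSup_mem hne hbdd
  refine ⟨xs.take t, ?_, fun x hx => hm x (List.take_subset _ _ hx), aux_take hr t⟩
  rw [List.length_take, hlen]
  exact Nat.min_eq_left ht


end NoethLocal

end StmtAux

end AuxDev

open StmtAux in
/-- Given a short exact sequence `0 → X → Y → Z → 0` of finitely generated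
modules over a Noetherian local ring, if `X ∈ DF(R)` and `Z ∈ Deep(R)` then `Y ∈ DF(R)`. -/
theorem stmt_2 (R : Type u) [CommRing R] [IsNoetherianRing R] [IsLocalRing R]
    (X Y Z : Type u) [AddCommGroup X] [Module R X] [Module.Finite R X]
    [AddCommGroup Y] [Module R Y] [Module.Finite R Y]
    [AddCommGroup Z] [Module R Z] [Module.Finite R Z]
    (f : X →ₗ[R] Y) (g : Y →ₗ[R] Z)
    (hf : Function.Injective f) (hg : Function.Surjective g)
    (hfg : LinearMap.range f = LinearMap.ker g)
    (hX : DF R X) (hZ : Deep R Z) :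
    DF R Y := by
  obtain ⟨n, f₀, hf₀, hfinA, hdeepA⟩ := hX
  set F : R →ₗ[R] (Fin n → Y) := (f.compLeft (Fin n)).comp f₀ with hF
  have hcompLeft_inj : Function.Injective (f.compLeft (Fin n)) := by
    intro a b h
    funext i
    exact hf (congrFun h i)
  have hFinj : Function.Injective F := hcompLeft_inj.comp hf₀
  refine ⟨n, F, hFinj, inferInstance, ?_⟩
  by_cases ht : rdepth R R = 0
  · rw [ht]; exact Nat.zero_le _
  -- t > 0
  have hn : n ≠ 0 := by
    rintro rfl
    have h01 : f₀ 0 = f₀ 1 := Subsingleton.elim _ _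
    exact one_ne_zero (hf₀ h01).symm
  -- sequences of length t on A and on Z
  obtain ⟨xs, hxlen, hxmem, hxreg⟩ := aux_extract ((Fin n → X) ⧸ LinearMap.range f₀) hdeepA ht
  obtain ⟨ys, hylen, hymem, hyreg⟩ := aux_extract Z hZ.2 ht
  have hyreg' : RingTheory.Sequence.IsRegular (Fin n → Z) ys := aux_pi_reg Z hn hyreg
  -- the short exact sequence A → C → Zⁿ
  have hle1 : LinearMap.range f₀ ≤
      Submodule.comap (f.compLeft (Fin n)) (LinearMap.range F) := by
    rintro _ ⟨r, rfl⟩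
    exact ⟨r, rfl⟩
  set fbar : ((Fin n → X) ⧸ LinearMap.range f₀) →ₗ[R] ((Fin n → Y) ⧸ LinearMap.range F) :=
    Submodule.mapQ _ _ (f.compLeft (Fin n)) hle1 with hfbar
  have hle2 : LinearMap.range F ≤ LinearMap.ker (g.compLeft (Fin n)) := by
    rintro _ ⟨r, rfl⟩
    rw [LinearMap.mem_ker]
    funext i
    show g (f (f₀ r i)) = 0
    have : f (f₀ r i) ∈ LinearMap.ker g := by rw [← hfg]; exact ⟨f₀ r i, rfl⟩
    exact this
  set gbar : ((Fin n → Y) ⧸ LinearMap.range F) →ₗ[R] (Fin n → Z) :=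
    Submodule.liftQ _ (g.compLeft (Fin n)) hle2 with hgbar
  have hfbar_inj : Function.Injective fbar := by
    have key : ∀ x : Fin n → X, fbar (Submodule.Quotient.mk x) = 0 →
        (Submodule.Quotient.mk x : (Fin n → X) ⧸ LinearMap.range f₀) = 0 := by
      intro x hx
      rw [hfbar, Submodule.mapQ_apply, Submodule.Quotient.mk_eq_zero] at hx
      obtain ⟨r, hr⟩ := hx
      rw [Submodule.Quotient.mk_eq_zero]
      refine ⟨r, hcompLeft_inj ?_⟩
      exact hr
    intro w1 w2 hw
    rw [← sub_eq_zero]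
    obtain ⟨x, hx⟩ := Submodule.mkQ_surjective _ (w1 - w2)
    rw [← hx]
    apply key
    rw [Submodule.mkQ_apply] at hx
    rw [hx, map_sub, hw, sub_self]
  have hgbar_surj : Function.Surjective gbar := by
    intro z
    refine ⟨Submodule.Quotient.mk (fun i => (hg (z i)).choose), ?_⟩
    rw [hgbar, Submodule.liftQ_apply]
    funext i
    exact (hg (z i)).choose_spec
  have hrange : LinearMap.range fbar = LinearMap.ker gbar := by
    apply le_antisymm
    · rintro _ ⟨w, rfl⟩
      obtain ⟨x, rfl⟩ := Submodule.mkQ_surjective _ w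
      rw [LinearMap.mem_ker, Submodule.mkQ_apply, hfbar, Submodule.mapQ_apply, hgbar,
        Submodule.liftQ_apply]
      funext i
      show g (f (x i)) = 0
      have : f (x i) ∈ LinearMap.ker g := by rw [← hfg]; exact ⟨x i, rfl⟩
      exact this
    · intro w hw
      obtain ⟨y, rfl⟩ := Submodule.mkQ_surjective _ w
      rw [LinearMap.mem_ker, Submodule.mkQ_apply, hgbar, Submodule.liftQ_apply] at hw
      have hy : ∀ i, y i ∈ LinearMap.range f := by
        intro i
        rw [hfg]
        exact congrFun hw i
      refine ⟨Submodule.Quotient.mk (fun i => (hy i).choose), ?_⟩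
      rw [hfbar, Submodule.mapQ_apply, Submodule.mkQ_apply]
      congr 1
      funext i
      exact (hy i).choose_spec
  obtain ⟨zs, hzlen, hzmem, hzreg⟩ := aux_middle (rdepth R R)
    ((Fin n → X) ⧸ LinearMap.range f₀) ((Fin n → Y) ⧸ LinearMap.range F) (Fin n → Z)
    fbar gbar hfbar_inj hgbar_surj hrange
    ⟨xs, hxlen, hxmem, hxreg⟩ ⟨ys, hylen, hymem, hyreg'⟩
  rw [rdepth]
  exact le_csSup (aux_bdd _) ⟨zs, hzlen, hzmem, hzreg⟩
end

section
/- Suppose M, N ∈ Deep(R) and Ext^i_R(M, N) = 0 for all 1 ≤ i ≤ t − 1. Let x₁, …, xₙ ∈ 𝔪 with n ≤ t be a sequence that is regular on R, on M, and on N, and write (−)‾ for reduction modulo (x₁, …, xₙ). Then the natural map Hom_R(M, N) ⊗_R R̄ → Hom_{R̄}(M̄, N̄) is an isomorphism when n < t, and is injective when n = t. -/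
universe u

open IsLocalRing

/-- The natural reduction map `Hom_R(M,N) → Hom_{R̄}(M̄,N̄)`, `f ↦ f̄`, where
`(-)‾` denotes reduction modulo an ideal `I` (an `R`-linear map between modules
killed by `I` is the same thing as an `R/I`-linear map). -/
noncomputable def reduceHom (R : Type u) [CommRing R] (I : Ideal R)
    (M N : Type u) [AddCommGroup M] [Module R M] [AddCommGroup N] [Module R N] :
    (M →ₗ[R] N) →ₗ[R]
      ((M ⧸ (I • ⊤ : Submodule R M)) →ₗ[R] (N ⧸ (I • ⊤ : Submodule R N))) where
  toFun f := Submodule.mapQ _ _ f (by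
    rw [← Submodule.map_le_iff_le_comap, Submodule.map_smul'']
    exact Submodule.smul_mono le_rfl le_top)
  map_add' f g := by
    apply LinearMap.ext
    intro x
    obtain ⟨x, rfl⟩ := Submodule.Quotient.mk_surjective _ x
    simp [Submodule.mapQ_apply]
  map_smul' r f := by
    apply LinearMap.ext
    intro x
    obtain ⟨x, rfl⟩ := Submodule.Quotient.mk_surjective _ x
    simp [Submodule.mapQ_apply]

noncomputable section
namespace StmtAux
open CategoryTheory Submodule Pointwise ModuleCat
variable {R : Type u} [CommRing R] {M : Type u} [AddCommGroup M] [Module R M]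

lemma isZero_iff_subsingleton (Z : ModuleCat.{u} R) : Limits.IsZero Z ↔ Subsingleton Z := by
  constructor
  · intro h
    have h0 : (𝟙 Z) = (0 : Z ⟶ Z) := h.eq_of_src _ _
    constructor
    intro a b
    have : ∀ z : Z, z = 0 := fun z => by
      calc z = (𝟙 Z) z := rfl
      _ = (0 : Z ⟶ Z) z := by rw [h0]
      _ = 0 := rfl
    rw [this a, this b]
  · intro h
    exact ModuleCat.isZero_of_subsingleton Z

lemma mem_smul_top_iff {N : Type u} [AddCommGroup N] [Module R N] (x : R) (n : N) :
    n ∈ (x • ⊤ : Submodule R N) ↔ ∃ m, x • m = n := by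
  rw [← SetLike.mem_coe, Submodule.coe_pointwise_smul, Set.mem_smul_set]
  simp

/-- Division of a linear map by a nonzerodivisor. -/
lemma exists_div {N : Type u} [AddCommGroup N] [Module R N] {x : R} (hx : IsSMulRegular N x)
    {A : Type*} [AddCommGroup A] [Module R A] (f : A →ₗ[R] N) (hf : ∀ a, ∃ n, x • n = f a) :
    ∃ g : A →ₗ[R] N, ∀ a, x • g a = f a := by
  choose g hg using hf
  refine ⟨⟨⟨g, fun a b => hx ?_⟩, fun r a => hx ?_⟩, hg⟩
  · show x • g (a + b) = x • (g a + g b)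
    rw [smul_add, hg, hg, hg, map_add]
  · show x • g (r • a) = x • (r • g a)
    rw [hg, smul_comm, hg, map_smul]

lemma extIff (P : ProjectiveResolution (ModuleCat.of R M)) (Y : Type u) [AddCommGroup Y] [Module R Y] (j : ℕ) :
    ExtVanishes R M Y (j+1) ↔
      ∀ θ : P.complex.X (j+1) ⟶ ModuleCat.of R Y,
        P.complex.d (j+2) (j+1) ≫ θ = 0 →
        ∃ σ : P.complex.X j ⟶ ModuleCat.of R Y, P.complex.d (j+1) j ≫ σ = θ := by
  have e1 : ExtVanishes R M Y (j+1) ↔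
      Subsingleton ((P.complex.linearYonedaObj R (ModuleCat.of R Y)).homology (j+1)) :=
    (P.isoExt (j+1) (ModuleCat.of R Y)).toLinearEquiv.toEquiv.subsingleton_congr
  have e2 : Subsingleton ((P.complex.linearYonedaObj R (ModuleCat.of R Y)).homology (j+1)) ↔
      (P.complex.linearYonedaObj R (ModuleCat.of R Y)).ExactAt (j+1) := by
    rw [HomologicalComplex.exactAt_iff_isZero_homology, isZero_iff_subsingleton]
  have e3 : (P.complex.linearYonedaObj R (ModuleCat.of R Y)).ExactAt (j+1) ↔
      ((P.complex.linearYonedaObj R (ModuleCat.of R Y)).sc' j (j+1) (j+2)).Exact :=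
    HomologicalComplex.exactAt_iff' _ j (j+1) (j+2) (CochainComplex.prev_nat_succ j) (by simp)
  rw [e1, e2, e3, ShortComplex.moduleCat_exact_iff]
  have hd : ∀ (a b : ℕ) (f : (P.complex.linearYonedaObj R (ModuleCat.of R Y)).X a),
      (P.complex.linearYonedaObj R (ModuleCat.of R Y)).d a b f = P.complex.d b a ≫ f := by
    intro a b f
    rfl
  constructor
  · intro h θ hθ
    obtain ⟨σ, hσ⟩ := h θ ((hd (j+1) (j+2) θ).trans hθ)
    exact ⟨σ, (hd j (j+1) σ).symm.trans hσ⟩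
  · intro h θ hθ
    obtain ⟨σ, hσ⟩ := h θ ((hd (j+1) (j+2) θ).symm.trans hθ)
    exact ⟨σ, (hd j (j+1) σ).trans hσ⟩

lemma extVanishes_quot (P : ProjectiveResolution (ModuleCat.of R M)) {N : Type u} [AddCommGroup N] [Module R N] {x : R}
    (hx : IsSMulRegular N x) (i : ℕ)
    (h1 : ExtVanishes R M N (i+1)) (h2 : ExtVanishes R M N (i+2)) :
    ExtVanishes R M (QuotSMulTop x N) (i+1) := by
  rw [extIff P] at h1 h2 ⊢
  intro θ hθ
  -- q : of R N ⟶ of R (QuotSMulTop x N)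
  set q : ModuleCat.of R N ⟶ ModuleCat.of R (QuotSMulTop x N) :=
    ModuleCat.ofHom (x • ⊤ : Submodule R N).mkQ with hq
  haveI : Epi q := (ModuleCat.epi_iff_surjective q).mpr (Submodule.mkQ_surjective _)
  set ψ : P.complex.X (i+1) ⟶ ModuleCat.of R N := Projective.factorThru θ q with hψ
  have hψq : ψ ≫ q = θ := Projective.factorThru_comp θ q
  have hdiv : ∀ p, ∃ n, x • n = (P.complex.d (i+2) (i+1) ≫ ψ) p := by
    intro p
    rw [← mem_smul_top_iff, ← Submodule.ker_mkQ (x • ⊤ : Submodule R N), LinearMap.mem_ker]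
    have : ((P.complex.d (i+2) (i+1) ≫ ψ) ≫ q) p = 0 := by
      rw [Category.assoc, hψq, hθ]
      rfl
    exact this
  obtain ⟨θ', hθ'⟩ := exists_div hx (P.complex.d (i+2) (i+1) ≫ ψ).hom hdiv
  have hcoc : P.complex.d (i+3) (i+2) ≫ ModuleCat.ofHom θ' = 0 := by
    apply ModuleCat.hom_ext
    apply LinearMap.ext
    intro p
    apply hx
    show x • θ' (P.complex.d (i+3) (i+2) p) = x • (0 : N)
    rw [hθ', smul_zero]
    show ψ (P.complex.d (i+2) (i+1) (P.complex.d (i+3) (i+2) p)) = 0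
    have hdd : P.complex.d (i+2) (i+1) (P.complex.d (i+3) (i+2) p) = 0 := by
      have h0 : (P.complex.d (i+3) (i+2) ≫ P.complex.d (i+2) (i+1)) p
          = (0 : P.complex.X (i+3) ⟶ P.complex.X (i+1)) p := by
        rw [P.complex.d_comp_d]
      exact h0
    rw [hdd, map_zero]
  obtain ⟨σ, hσ⟩ := h2 (ModuleCat.ofHom θ') hcoc
  have hcoc2 : P.complex.d (i+2) (i+1) ≫
      ModuleCat.ofHom (ψ.hom - x • σ.hom) = 0 := by
    apply ModuleCat.hom_ext
    apply LinearMap.ext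
    intro p
    show ψ (P.complex.d (i+2) (i+1) p) - x • σ (P.complex.d (i+2) (i+1) p) = 0
    have h1' : σ (P.complex.d (i+2) (i+1) p) = θ' p := congrArg (fun g => g p) hσ
    rw [h1', hθ']
    show ψ (P.complex.d (i+2) (i+1) p) - ψ (P.complex.d (i+2) (i+1) p) = 0
    rw [sub_self]
  obtain ⟨τ, hτ⟩ := h1 _ hcoc2
  refine ⟨τ ≫ q, ?_⟩
  apply ModuleCat.hom_ext
  apply LinearMap.ext
  intro p
  have h2' : τ (P.complex.d (i+1) i p) = ψ p - x • σ p := congrArg (fun g => g p) hτ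
  show q (τ (P.complex.d (i+1) i p)) = θ p
  rw [h2']
  have hxσ : q (x • σ p) = 0 := by
    show Submodule.Quotient.mk (x • σ p) = 0
    rw [Submodule.Quotient.mk_eq_zero]
    exact Submodule.smul_mem_pointwise_smul _ _ _ Submodule.mem_top
  rw [map_sub, hxσ, sub_zero, ← hψq]
  rfl

lemma lift_of_ext1 (P : ProjectiveResolution (ModuleCat.of R M)) {N : Type u} [AddCommGroup N] [Module R N] {x : R}
    (hx : IsSMulRegular N x) (hE : ExtVanishes R M N 1)
    (φ : M →ₗ[R] QuotSMulTop x N) :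
    ∃ f : M →ₗ[R] N, ((x • ⊤ : Submodule R N).mkQ).comp f = φ := by
  rw [extIff P] at hE
  set q : ModuleCat.of R N ⟶ ModuleCat.of R (QuotSMulTop x N) :=
    ModuleCat.ofHom (x • ⊤ : Submodule R N).mkQ with hq
  haveI : Epi q := (ModuleCat.epi_iff_surjective q).mpr (Submodule.mkQ_surjective _)
  set π0 : P.complex.X 0 ⟶ ModuleCat.of R M := P.π.f 0 with hπ0
  have hπsurj : Function.Surjective π0 := (ModuleCat.epi_iff_surjective π0).mp (inferInstanceAs (Epi (P.π.f 0)))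
  set θ : P.complex.X 0 ⟶ ModuleCat.of R (QuotSMulTop x N) := π0 ≫ ModuleCat.ofHom φ with hθdef
  set ψ : P.complex.X 0 ⟶ ModuleCat.of R N := Projective.factorThru θ q with hψ
  have hψq : ψ ≫ q = θ := Projective.factorThru_comp θ q
  have hdiv : ∀ p, ∃ n, x • n = (P.complex.d 1 0 ≫ ψ) p := by
    intro p
    rw [← mem_smul_top_iff, ← Submodule.ker_mkQ (x • ⊤ : Submodule R N), LinearMap.mem_ker]
    have : ((P.complex.d 1 0 ≫ ψ) ≫ q) p = 0 := by
      have hz : P.complex.d 1 0 ≫ π0 = 0 := P.complex_d_comp_π_f_zero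
      rw [Category.assoc, hψq, hθdef, ← Category.assoc, hz,
        Limits.zero_comp]
      rfl
    exact this
  obtain ⟨θ', hθ'⟩ := exists_div hx (P.complex.d 1 0 ≫ ψ).hom hdiv
  have hcoc : P.complex.d 2 1 ≫ ModuleCat.ofHom θ' = 0 := by
    apply ModuleCat.hom_ext
    apply LinearMap.ext
    intro p
    apply hx
    show x • θ' (P.complex.d 2 1 p) = x • (0 : N)
    rw [hθ', smul_zero]
    show ψ (P.complex.d 1 0 (P.complex.d 2 1 p)) = 0
    have hdd : P.complex.d 1 0 (P.complex.d 2 1 p) = 0 := by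
      have h0 : (P.complex.d 2 1 ≫ P.complex.d 1 0) p
          = (0 : P.complex.X 2 ⟶ P.complex.X 0) p := by
        rw [P.complex.d_comp_d]
      exact h0
    rw [hdd, map_zero]
  obtain ⟨σ, hσ⟩ := hE (ModuleCat.ofHom θ') hcoc
  -- ψ2 kills the image of d 1 0, hence the kernel of π0
  set ψ2 : P.complex.X 0 →ₗ[R] N := ψ.hom - x • σ.hom with hψ2
  have hexact0 : ∀ p : P.complex.X 0, π0 p = 0 → ∃ w, P.complex.d 1 0 w = p := by
    have hex : (ShortComplex.mk (P.complex.d 1 0) π0 P.complex_d_comp_π_f_zero).Exact :=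
      ShortComplex.exact_of_g_is_cokernel _ P.isColimitCokernelCofork
    rw [ShortComplex.moduleCat_exact_iff] at hex
    exact hex
  have hker : ∀ p : P.complex.X 0, π0 p = 0 → ψ2 p = 0 := by
    intro p hp
    obtain ⟨w, rfl⟩ := hexact0 p hp
    show ψ (P.complex.d 1 0 w) - x • σ (P.complex.d 1 0 w) = 0
    have h1' : σ (P.complex.d 1 0 w) = θ' w := congrArg (fun g => g w) hσ
    rw [h1', hθ']
    show ψ (P.complex.d 1 0 w) - ψ (P.complex.d 1 0 w) = 0
    rw [sub_self]
  -- descend ψ2 along π0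
  have hle : LinearMap.ker π0.hom ≤ LinearMap.ker ψ2 :=
    fun p hp => hker p hp
  set e := LinearMap.quotKerEquivOfSurjective π0.hom hπsurj with he
  set f : M →ₗ[R] N :=
    ((LinearMap.ker π0.hom).liftQ ψ2 hle).comp e.symm.toLinearMap with hf
  refine ⟨f, ?_⟩
  apply LinearMap.ext
  intro m
  obtain ⟨p, rfl⟩ := hπsurj m
  have hesymm : e.symm (π0 p) = Submodule.Quotient.mk p := by
    apply e.injective
    rw [LinearEquiv.apply_symm_apply]
    rfl
  have hfval : f (π0 p) = ψ2 p := by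
    rw [hf]
    show (LinearMap.ker π0.hom).liftQ ψ2 hle (e.symm (π0 p)) = ψ2 p
    rw [hesymm]
    rfl
  show Submodule.Quotient.mk (f (π0 p)) = φ (π0 p)
  rw [hfval]
  show Submodule.Quotient.mk (ψ p - x • σ p) = φ (π0 p)
  rw [Submodule.Quotient.mk_sub]
  have hxσ : Submodule.Quotient.mk (p := (x • ⊤ : Submodule R N)) (x • σ p) = 0 := by
    rw [Submodule.Quotient.mk_eq_zero]
    exact Submodule.smul_mem_pointwise_smul _ _ _ Submodule.mem_top
  rw [hxσ, sub_zero]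
  have := congrArg (fun g => g p) hψq
  exact this

lemma smul_top_quot_eq_bot {N : Type u} [AddCommGroup N] [Module R N] (x : R) :
    (x • ⊤ : Submodule R (QuotSMulTop x N)) = ⊥ := by
  rw [eq_bot_iff]
  intro m hm
  rw [mem_smul_top_iff] at hm
  obtain ⟨n', rfl⟩ := hm
  obtain ⟨n, rfl⟩ := Submodule.Quotient.mk_surjective _ n'
  rw [Submodule.mem_bot, ← Submodule.Quotient.mk_smul, Submodule.Quotient.mk_eq_zero]
  exact Submodule.smul_mem_pointwise_smul _ _ _ Submodule.mem_top

lemma surj_aux (P : ProjectiveResolution (ModuleCat.of R M)) (xs : List R) :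
    ∀ (N : Type u) [AddCommGroup N] [Module R N],
    RingTheory.Sequence.IsWeaklyRegular N xs →
    (∀ i, 1 ≤ i → i ≤ xs.length → ExtVanishes R M N i) →
    Function.Surjective (fun f : M →ₗ[R] N =>
      ((Ideal.ofList xs • ⊤ : Submodule R N).mkQ).comp f) := by
  induction xs with
  | nil =>
    intro N _ _ hreg hext φ
    have hbot : (Ideal.ofList ([] : List R) • ⊤ : Submodule R N) = ⊥ := by
      rw [Ideal.ofList_nil, Submodule.bot_smul]
    refine ⟨(Submodule.quotEquivOfEqBot _ hbot).toLinearMap.comp φ, ?_⟩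
    apply LinearMap.ext
    intro m
    obtain ⟨y, hy⟩ := Submodule.Quotient.mk_surjective _ (φ m)
    show Submodule.Quotient.mk ((Submodule.quotEquivOfEqBot _ hbot) (φ m)) = φ m
    rw [← hy, Submodule.quotEquivOfEqBot_apply_mk]
  | cons x xs ih =>
    intro N _ _ hreg hext
    obtain ⟨hx, hreg'⟩ := (RingTheory.Sequence.isWeaklyRegular_cons_iff N x xs).mp hreg
    have hext' : ∀ i, 1 ≤ i → i ≤ xs.length → ExtVanishes R M (QuotSMulTop x N) i := by
      intro i h1 h2
      match i, h1 with
      | (j+1), _ =>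
        exact extVanishes_quot P hx j
          (hext (j+1) (by omega) (by simp only [List.length_cons]; omega))
          (hext (j+2) (by omega) (by simp only [List.length_cons]; omega))
    intro φ
    set e := Submodule.quotOfListConsSMulTopEquivQuotSMulTopInner N x xs with he
    obtain ⟨g, hg⟩ := ih (QuotSMulTop x N) hreg' hext' (e.toLinearMap.comp φ)
    obtain ⟨f, hf⟩ := lift_of_ext1 P hx
      (hext 1 le_rfl (by simp only [List.length_cons]; omega)) g
    refine ⟨f, ?_⟩
    apply LinearMap.ext
    intro m
    apply e.injective
    have hfm : Submodule.Quotient.mk (p := (x • ⊤ : Submodule R N)) (f m) = g m :=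
      congrArg (fun h => h m) hf
    have hgm : Submodule.Quotient.mk (g m) = e (φ m) := congrArg (fun h => h m) hg
    show e (Submodule.Quotient.mk (f m)) = e (φ m)
    calc e (Submodule.Quotient.mk (f m))
        = Submodule.Quotient.mk (Submodule.Quotient.mk (p := (x • ⊤ : Submodule R N)) (f m)) :=
          rfl
      _ = Submodule.Quotient.mk (g m) := by rw [hfm]
      _ = e (φ m) := hgm

lemma ker_aux (P : ProjectiveResolution (ModuleCat.of R M)) (xs : List R) :
    ∀ (N : Type u) [AddCommGroup N] [Module R N],
    RingTheory.Sequence.IsWeaklyRegular N xs →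
    (∀ i, 1 ≤ i → i + 1 ≤ xs.length → ExtVanishes R M N i) →
    ∀ f : M →ₗ[R] N, (∀ m, f m ∈ (Ideal.ofList xs • ⊤ : Submodule R N)) →
    f ∈ (Ideal.ofList xs • ⊤ : Submodule R (M →ₗ[R] N)) := by
  induction xs with
  | nil =>
    intro N _ _ hreg hext f hf
    have hf0 : f = 0 := by
      apply LinearMap.ext
      intro m
      have := hf m
      rw [Ideal.ofList_nil, Submodule.bot_smul, Submodule.mem_bot] at this
      simpa using this
    rw [hf0]
    exact Submodule.zero_mem _
  | cons x xs ih =>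
    intro N _ _ hreg hext f hf
    obtain ⟨hx, hreg'⟩ := (RingTheory.Sequence.isWeaklyRegular_cons_iff N x xs).mp hreg
    have hextq : ∀ i, 1 ≤ i → i + 1 ≤ xs.length → ExtVanishes R M (QuotSMulTop x N) i := by
      intro i h1 h2
      match i, h1 with
      | (j+1), _ =>
        exact extVanishes_quot P hx j
          (hext (j+1) (by omega) (by simp only [List.length_cons]; omega))
          (hext (j+2) (by omega) (by simp only [List.length_cons]; omega))
    set L := LinearMap.llcomp (σ₁₂ := RingHom.id R) (σ₂₃ := RingHom.id R) (σ₁₃ := RingHom.id R) R M N (QuotSMulTop x N) ((x • ⊤ : Submodule R N).mkQ) with hL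
    have hmapclaim : Submodule.map ((x • ⊤ : Submodule R N).mkQ)
        (Ideal.ofList (x::xs) • ⊤ : Submodule R N)
        = (Ideal.ofList xs • ⊤ : Submodule R (QuotSMulTop x N)) := by
      rw [Submodule.map_smul'', Submodule.map_top, Submodule.range_mkQ,
        Ideal.ofList_cons_smul, smul_top_quot_eq_bot, bot_sup_eq]
    have hf1mem : ∀ m, (L f) m ∈ (Ideal.ofList xs • ⊤ : Submodule R (QuotSMulTop x N)) := by
      intro m
      rw [← hmapclaim]
      exact Submodule.mem_map_of_mem (hf m)
    have hf1 : L f ∈ (Ideal.ofList xs • ⊤ : Submodule R (M →ₗ[R] QuotSMulTop x N)) :=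
      ih (QuotSMulTop x N) hreg' hextq (L f) hf1mem
    have hmapL : (Ideal.ofList xs • ⊤ : Submodule R (M →ₗ[R] QuotSMulTop x N))
        = Submodule.map L (Ideal.ofList xs • ⊤ : Submodule R (M →ₗ[R] N)) := by
      cases xs with
      | nil => simp [Ideal.ofList_nil]
      | cons y ys =>
        have hsurj : Function.Surjective L := by
          intro φ
          obtain ⟨f', hf'⟩ := lift_of_ext1 P hx
            (hext 1 le_rfl (by simp only [List.length_cons]; omega)) φ
          exact ⟨f', hf'⟩
        rw [Submodule.map_smul'', Submodule.map_top, LinearMap.range_eq_top.mpr hsurj]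
    rw [hmapL] at hf1
    obtain ⟨g, hgmem, hgeq⟩ := Submodule.mem_map.mp hf1
    have hdf : ∀ m, ∃ n, x • n = (f - g) m := by
      intro m
      rw [← mem_smul_top_iff, ← Submodule.ker_mkQ (x • ⊤ : Submodule R N), LinearMap.mem_ker]
      show (x • ⊤ : Submodule R N).mkQ (f m - g m) = 0
      rw [map_sub]
      have h1 : (x • ⊤ : Submodule R N).mkQ (f m) = (L f) m := rfl
      have h2 : (x • ⊤ : Submodule R N).mkQ (g m) = (L g) m := rfl
      rw [h1, h2, hgeq, sub_self]
    obtain ⟨h', hh'⟩ := exists_div hx (f - g) hdf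
    have hfg : f = x • h' + g := by
      apply LinearMap.ext
      intro m
      show f m = x • h' m + g m
      rw [hh' m]
      show f m = (f m - g m) + g m
      rw [sub_add_cancel]
    rw [hfg]
    refine Submodule.add_mem _ ?_ ?_
    · exact Submodule.smul_mem_smul (Ideal.subset_span (by simp)) Submodule.mem_top
    · refine Submodule.smul_mono (Ideal.span_mono ?_) le_rfl hgmem
      intro r hr
      exact List.mem_cons_of_mem x hr

end StmtAux
end


/-- Suppose `M, N ∈ Deep(R)` and `Ext^i(M,N) = 0` for `1 ≤ i ≤ t-1`,
`t = depth R`.  Let `x₁, …, xₙ ∈ 𝔪` with `n ≤ t` be a sequence regular on `R`, `M` and `N`,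
and let `I = (x₁, …, xₙ)`.  The natural map `Hom_R(M,N) ⊗ R̄ → Hom_{R̄}(M̄,N̄)` is an
isomorphism when `n < t` and injective when `n = t`.  (Identifying
`Hom_R(M,N) ⊗ R̄ = Hom_R(M,N)/I·Hom_R(M,N)`, the map being an isomorphism is expressed as:
`reduceHom` is surjective with kernel exactly `I • ⊤`; it being injective is expressed as:
the kernel of `reduceHom` is exactly `I • ⊤`.) -/
theorem stmt_3 (R : Type u) [CommRing R] [IsNoetherianRing R] [IsLocalRing R]
    (M N : Type u) [AddCommGroup M] [Module R M] [Module.Finite R M]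
    [AddCommGroup N] [Module R N] [Module.Finite R N]
    (hM : Deep R M) (hN : Deep R N)
    (hext : ∀ i : ℕ, 1 ≤ i → i ≤ rdepth R R - 1 → ExtVanishes R M N i)
    (xs : List R) (hle : xs.length ≤ rdepth R R)
    (hmem : ∀ x ∈ xs, x ∈ maximalIdeal R)
    (hregR : RingTheory.Sequence.IsRegular R xs)
    (hregM : RingTheory.Sequence.IsRegular M xs)
    (hregN : RingTheory.Sequence.IsRegular N xs) :
    (xs.length < rdepth R R →
      Function.Surjective (reduceHom R (Ideal.ofList xs) M N) ∧
      LinearMap.ker (reduceHom R (Ideal.ofList xs) M N)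
        = (Ideal.ofList xs • ⊤ : Submodule R (M →ₗ[R] N))) ∧
    (xs.length = rdepth R R →
      LinearMap.ker (reduceHom R (Ideal.ofList xs) M N)
        = (Ideal.ofList xs • ⊤ : Submodule R (M →ₗ[R] N))) := by
  classical
  have P : CategoryTheory.ProjectiveResolution (ModuleCat.of R M) :=
    (CategoryTheory.HasProjectiveResolution.out (Z := ModuleCat.of R M)).some
  have happly : ∀ f : M →ₗ[R] N,
      f ∈ (Ideal.ofList xs • ⊤ : Submodule R (M →ₗ[R] N)) →
      ∀ m, f m ∈ (Ideal.ofList xs • ⊤ : Submodule R N) := by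
    intro f hf m
    refine Submodule.smul_induction_on hf (fun r hr g _ => ?_) (fun g h hg hh => ?_)
    · exact Submodule.smul_mem_smul hr Submodule.mem_top
    · exact Submodule.add_mem _ hg hh
  have hker : (∀ i, 1 ≤ i → i + 1 ≤ xs.length → ExtVanishes R M N i) →
      LinearMap.ker (reduceHom R (Ideal.ofList xs) M N)
        = (Ideal.ofList xs • ⊤ : Submodule R (M →ₗ[R] N)) := by
    intro hE
    apply le_antisymm
    · intro f hfker
      apply StmtAux.ker_aux P xs N hregN.toIsWeaklyRegular hE f
      intro m
      have h0 : reduceHom R (Ideal.ofList xs) M N f = 0 := hfker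
      have h1 := congrArg (fun g => g (Submodule.Quotient.mk m)) h0
      rw [← Submodule.Quotient.mk_eq_zero]
      exact h1
    · intro f hfmem
      rw [LinearMap.mem_ker]
      apply LinearMap.ext
      intro z
      obtain ⟨m, rfl⟩ := Submodule.Quotient.mk_surjective _ z
      show Submodule.Quotient.mk (f m) = 0
      rw [Submodule.Quotient.mk_eq_zero]
      exact happly f hfmem m
  constructor
  · intro hlt
    constructor
    · intro h
      obtain ⟨f, hf⟩ := StmtAux.surj_aux P xs N hregN.toIsWeaklyRegular
        (fun i h1 h2 => hext i h1 (by omega))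
        (h.comp (Ideal.ofList xs • ⊤ : Submodule R M).mkQ)
      refine ⟨f, ?_⟩
      apply LinearMap.ext
      intro z
      obtain ⟨m, rfl⟩ := Submodule.Quotient.mk_surjective _ z
      exact congrArg (fun g => g m) hf
    · exact hker (fun i h1 h2 => hext i h1 (by omega))
  · intro heq
    exact hker (fun i h1 h2 => hext i h1 (by omega))
end
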